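/- arXiv:1210.3204 — 3 statements merged into one kernel-verified Lean document; each statement's English description precedes it below -/
import Mathlib

section
/- Let 2 ≤ r ≤ d be integers and let A = SV_d^{(r)} be the squarefree Veronese configuration whose columns are all 0/1-vectors in ℤ^d with coordinate sum r. Then the toric ideal I_A is generated by the set C_A^{sf,sf} of circuits both of whose monomials are squarefree. -/
open MvPolynomial

/-- The binomial `X^u - X^v`. -/
noncomputable def binom {σ : Type*} (K : Type*) [Field K] (u v : σ →₀ ℕ) :
    MvPolynomial σ K :=
  MvPolynomial.monomial u 1 - MvPolynomial.monomial v 1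

/-- A binomial `X^u - X^v` with `u ≠ v`. -/
def IsBinomial {σ K : Type*} [Field K] (f : MvPolynomial σ K) : Prop :=
  ∃ u v : σ →₀ ℕ, u ≠ v ∧ f = binom K u v

/-- An exponent vector is squarefree if every entry is at most one. -/
def SqfreeExp {σ : Type*} (u : σ →₀ ℕ) : Prop := ∀ i, u i ≤ 1

/-- `f` is a circuit of the ideal `I`: an irreducible binomial in `I` such that no
binomial of `I` has support (set of variables) properly contained in that of `f`. -/
def IsCircuit {σ K : Type*} [Field K] (I : Ideal (MvPolynomial σ K))
    (f : MvPolynomial σ K) : Prop :=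
  IsBinomial f ∧ f ∈ I ∧ Irreducible f ∧
    ∀ g ∈ I, IsBinomial g → ¬ (g.vars ⊂ f.vars)

/-- The set `C_A` of circuits of `I`. -/
def Circuits {σ : Type*} (K : Type*) [Field K] (I : Ideal (MvPolynomial σ K)) :
    Set (MvPolynomial σ K) :=
  {f | IsCircuit I f}

/-- The set `C_A^sf` of circuits of `I` having at least one squarefree monomial. -/
def CircuitsSF {σ : Type*} (K : Type*) [Field K] (I : Ideal (MvPolynomial σ K)) :
    Set (MvPolynomial σ K) :=
  {f | IsCircuit I f ∧
    ∃ u v : σ →₀ ℕ, u ≠ v ∧ f = binom K u v ∧ (SqfreeExp u ∨ SqfreeExp v)}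

/-- The set `C_A^{sf,sf}` of circuits of `I` both of whose monomials are squarefree. -/
def CircuitsSFSF {σ : Type*} (K : Type*) [Field K] (I : Ideal (MvPolynomial σ K)) :
    Set (MvPolynomial σ K) :=
  {f | IsCircuit I f ∧
    ∃ u v : σ →₀ ℕ, u ≠ v ∧ f = binom K u v ∧ (SqfreeExp u ∧ SqfreeExp v)}

/-- The monomial map `x_j ↦ t^{a_j}` into the Laurent polynomial ring
`K[t_1^{±1},…,t_d^{±1}] = K[ℤ^d]`, where `a_j` is the `j`-th column of `A`. -/
noncomputable def toricMap (K : Type*) [Field K] {d : ℕ} {ι : Type*}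
    (A : Matrix (Fin d) ι ℤ) :
    MvPolynomial ι K →ₐ[K] AddMonoidAlgebra K (Fin d → ℤ) :=
  MvPolynomial.aeval fun j => AddMonoidAlgebra.single (fun i => A i j) (1 : K)

/-- The toric ideal `I_A` of the configuration `A`. -/
noncomputable def toricIdeal (K : Type*) [Field K] {d : ℕ} {ι : Type*}
    (A : Matrix (Fin d) ι ℤ) : Ideal (MvPolynomial ι K) :=
  RingHom.ker (toricMap K A).toRingHom

/-- `A` is a configuration: its columns are pairwise distinct and lie on a common
affine hyperplane not passing through the origin. -/
structure IsConfiguration {d : ℕ} {ι : Type*} (A : Matrix (Fin d) ι ℤ) : Prop where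
  injective : Function.Injective fun j i => A i j
  hyperplane : ∃ w : Fin d → ℚ, ∀ j, (∑ i, w i * (A i j : ℚ)) = 1

/-- The `r`-th squarefree Veronese configuration: columns are the 0/1-vectors in `ℤ^d`
with coordinate sum `r`, indexed by the `r`-subsets of `Fin d`. -/
def SVconfig (d r : ℕ) : Matrix (Fin d) {s : Finset (Fin d) // s.card = r} ℤ :=
  fun i s => if i ∈ s.1 then 1 else 0


set_option maxHeartbeats 1000000

section AUX

-- auxiliary definitions and lemmas
section
variable {d r : ℕ} (K : Type*) [Field K]

abbrev SVIdx (d r : ℕ) := {s : Finset (Fin d) // s.card = r}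

def chi (S : SVIdx d r) : Fin d → ℤ := fun i => if i ∈ S.1 then 1 else 0

noncomputable def omg (u : SVIdx d r →₀ ℕ) : Fin d → ℤ := u.sum fun T n => n • chi T

theorem omg_add (u v : SVIdx d r →₀ ℕ) : omg (u + v) = omg u + omg v := by
  unfold omg
  rw [Finsupp.sum_add_index] <;> intros <;> simp [add_smul]

theorem omg_single (T : SVIdx d r) (n : ℕ) : omg (Finsupp.single T n) = n • chi T := by
  unfold omg
  rw [Finsupp.sum_single_index]; simp

theorem toricMap_monomial (u : SVIdx d r →₀ ℕ) (c : K) :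
    toricMap K (SVconfig d r) (monomial u c) = AddMonoidAlgebra.single (omg u) c := by
  unfold toricMap
  rw [aeval_monomial]
  have h1 : (u.prod fun T n => (AddMonoidAlgebra.single (fun i => SVconfig d r i T) (1:K))^n)
      = AddMonoidAlgebra.single (omg u) 1 := by
    unfold Finsupp.prod omg Finsupp.sum
    have : ∀ T ∈ u.support,
        (AddMonoidAlgebra.single (fun i => SVconfig d r i T) (1:K))^(u T)
        = AddMonoidAlgebra.single ((u T) • chi T) 1 := by
      intro T _
      rw [AddMonoidAlgebra.single_pow, one_pow]
      rfl
    rw [Finset.prod_congr rfl this, AddMonoidAlgebra.prod_single]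
    simp
  rw [h1, Algebra.algebraMap_eq_smul_one, smul_mul_assoc, one_mul]
  rw [AddMonoidAlgebra.single]
  rw [AddMonoidAlgebra.ofCoeff_single, AddMonoidAlgebra.smul_single]
  simp

theorem mem_toricIdeal_iff (f : MvPolynomial (SVIdx d r) K) :
    f ∈ toricIdeal K (SVconfig d r) ↔ toricMap K (SVconfig d r) f = 0 := by
  unfold toricIdeal
  rw [RingHom.mem_ker]
  rfl

end

section
variable {d r : ℕ} {K : Type*} [Field K]

theorem binom_mem_toricIdeal {u v : SVIdx d r →₀ ℕ} (h : omg u = omg v) :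
    binom K u v ∈ toricIdeal K (SVconfig d r) := by
  rw [mem_toricIdeal_iff]
  unfold binom
  rw [map_sub, toricMap_monomial, toricMap_monomial, h, sub_self]

theorem omg_eq_of_binom_mem {u v : SVIdx d r →₀ ℕ}
    (h : binom K u v ∈ toricIdeal K (SVconfig d r)) : omg u = omg v := by
  rw [mem_toricIdeal_iff] at h
  unfold binom at h
  rw [map_sub, toricMap_monomial, toricMap_monomial] at h
  have h2 : AddMonoidAlgebra.single (omg u) (1:K) = AddMonoidAlgebra.single (omg v) 1 :=
    sub_eq_zero.mp h
  exact (AddMonoidAlgebra.single_left_inj one_ne_zero).mp h2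

/-- The set of binomials of the toric ideal. -/
def BinomSet (K : Type*) [Field K] (d r : ℕ) : Set (MvPolynomial (SVIdx d r) K) :=
  {g | ∃ u v : SVIdx d r →₀ ℕ, u ≠ v ∧ omg u = omg v ∧ g = binom K u v}

theorem toricIdeal_le_span_binoms_aux :
    ∀ (n : ℕ) (f : MvPolynomial (SVIdx d r) K), f ∈ toricIdeal K (SVconfig d r) →
      f.support.card ≤ n → f ∈ Ideal.span (BinomSet K d r) := by
  intro n
  induction n with
  | zero =>
    intro f _ hc
    have : f.support = ∅ := Finset.card_eq_zero.mp (Nat.le_zero.mp hc)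
    rw [MvPolynomial.support_eq_empty.mp this]
    exact Ideal.zero_mem _
  | succ n ih =>
    intro f hf hc
    by_cases hf0 : f = 0
    · rw [hf0]; exact Ideal.zero_mem _
    · obtain ⟨u0, hu0⟩ := (MvPolynomial.support_nonempty.mpr hf0)
      -- image under toricMap
      have hmap : toricMap K (SVconfig d r) f
          = ∑ u ∈ f.support, AddMonoidAlgebra.single (omg u) (coeff u f) := by
        conv_lhs => rw [f.as_sum]
        rw [map_sum]
        exact Finset.sum_congr rfl fun u _ => toricMap_monomial (K:=K) u _
      have hzero : (0 : AddMonoidAlgebra K (Fin d → ℤ))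
          = ∑ u ∈ f.support, AddMonoidAlgebra.single (omg u) (coeff u f) := by
        rw [← hmap]; exact ((mem_toricIdeal_iff (K:=K) f).mp hf).symm
      have h0 := congrArg (fun p => p.coeff (omg u0)) hzero
      simp only [AddMonoidAlgebra.coeff_zero, Finsupp.coe_zero, Pi.zero_apply] at h0
      rw [AddMonoidAlgebra.coeff_sum, Finsupp.finset_sum_apply] at h0
      have h1 : (0:K) = ∑ u ∈ f.support.filter (fun u => omg u = omg u0), coeff u f := by
        rw [Finset.sum_filter]
        refine h0.trans (Finset.sum_congr rfl fun u _ => ?_)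
        rw [AddMonoidAlgebra.coeff_single, Finsupp.single_apply]
      -- find a partner
      have hu0f : u0 ∈ f.support.filter (fun u => omg u = omg u0) :=
        Finset.mem_filter.mpr ⟨hu0, rfl⟩
      have hex : ∃ v0 ∈ f.support.filter (fun u => omg u = omg u0), v0 ≠ u0 := by
        by_contra hno
        push_neg at hno
        have : f.support.filter (fun u => omg u = omg u0) = {u0} := by
          apply Finset.eq_singleton_iff_unique_mem.mpr ⟨hu0f, hno⟩
        rw [this, Finset.sum_singleton] at h1
        exact (MvPolynomial.mem_support_iff.mp hu0) h1.symm
      obtain ⟨v0, hv0mem, hv0ne⟩ := hex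
      have hv0supp : v0 ∈ f.support := (Finset.mem_filter.mp hv0mem).1
      have homg : omg v0 = omg u0 := (Finset.mem_filter.mp hv0mem).2
      set c := coeff u0 f with hc'
      set g := f - C c * binom K u0 v0 with hg
      have hbmem : binom K u0 v0 ∈ toricIdeal K (SVconfig d r) :=
        binom_mem_toricIdeal homg.symm
      have hgI : g ∈ toricIdeal K (SVconfig d r) :=
        Submodule.sub_mem _ hf (Ideal.mul_mem_left _ _ hbmem)
      have hgsupp : g.support ⊆ f.support.erase u0 := by
        intro x hx
        have hxg : coeff x g ≠ 0 := MvPolynomial.mem_support_iff.mp hx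
        have hcoeff : coeff x g = coeff x f - c * ((if u0 = x then (1:K) else 0)
            - (if v0 = x then 1 else 0)) := by
          rw [hg]
          simp [binom, MvPolynomial.coeff_sub, MvPolynomial.coeff_C_mul,
            MvPolynomial.coeff_monomial, mul_sub]
        by_cases hxu : x = u0
        · exfalso
          apply hxg
          rw [hcoeff, hxu]
          rw [if_pos rfl, if_neg hv0ne]
          simp [hc']
        · refine Finset.mem_erase.mpr ⟨hxu, ?_⟩
          by_cases hxv : x = v0
          · rw [hxv]; exact hv0supp
          · rw [MvPolynomial.mem_support_iff]
            rw [hcoeff, if_neg (fun h => hxu h.symm), if_neg (fun h => hxv h.symm)] at hxg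
            simpa using hxg
      have hcard : g.support.card ≤ n := by
        have h2 : (f.support.erase u0).card < f.support.card :=
          Finset.card_erase_lt_of_mem hu0
        have := Finset.card_le_card hgsupp
        omega
      have hgspan := ih g hgI hcard
      have hbspan : binom K u0 v0 ∈ Ideal.span (BinomSet K d r) :=
        Ideal.subset_span ⟨u0, v0, fun h => hv0ne h.symm, homg.symm, rfl⟩
      have : f = g + C c * binom K u0 v0 := by rw [hg]; ring
      rw [this]
      exact Ideal.add_mem _ hgspan (Ideal.mul_mem_left _ _ hbspan)

theorem toricIdeal_le_span_binoms (f : MvPolynomial (SVIdx d r) K)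
    (hf : f ∈ toricIdeal K (SVconfig d r)) : f ∈ Ideal.span (BinomSet K d r) :=
  toricIdeal_le_span_binoms_aux f.support.card f hf le_rfl

end

section
variable {d r : ℕ}

/-- Total degree of an exponent vector. -/
def degg (u : SVIdx d r →₀ ℕ) : ℕ := u.sum fun _ n => n

theorem degg_eq_sum (u : SVIdx d r →₀ ℕ) : degg u = ∑ T ∈ u.support, u T := rfl

theorem omg_apply (u : SVIdx d r →₀ ℕ) (i : Fin d) :
    omg u i = ∑ T ∈ u.support, (u T : ℤ) * chi T i := by
  unfold omg Finsupp.sum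
  rw [Finset.sum_apply]
  exact Finset.sum_congr rfl fun T _ => by simp [nsmul_eq_mul]

theorem chi_nonneg (T : SVIdx d r) (i : Fin d) : 0 ≤ chi T i := by
  unfold chi; split <;> norm_num

theorem chi_le_one (T : SVIdx d r) (i : Fin d) : chi T i ≤ 1 := by
  unfold chi; split <;> norm_num

theorem chi_eq_one_iff {T : SVIdx d r} {i : Fin d} : chi T i = 1 ↔ i ∈ T.1 := by
  unfold chi; split <;> simp_all

theorem chi_inj {T T' : SVIdx d r} (h : chi T = chi T') : T = T' := by
  apply Subtype.ext
  ext i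
  constructor <;> intro hi
  · exact chi_eq_one_iff.mp (h ▸ chi_eq_one_iff.mpr hi)
  · exact chi_eq_one_iff.mp (h.symm ▸ chi_eq_one_iff.mpr hi)

theorem sum_chi (T : SVIdx d r) : ∑ i, chi T i = (r : ℤ) := by
  unfold chi
  rw [Finset.sum_ite_mem, Finset.univ_inter, Finset.sum_const]
  simp [T.2]

theorem sum_omg (u : SVIdx d r →₀ ℕ) : ∑ i, omg u i = (r : ℤ) * (degg u : ℤ) := by
  have : ∑ i, omg u i = ∑ T ∈ u.support, (u T : ℤ) * (∑ i, chi T i) := by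
    simp only [omg_apply]
    rw [Finset.sum_comm]
    exact Finset.sum_congr rfl fun T _ => by rw [Finset.mul_sum]
  rw [this]
  simp only [sum_chi]
  rw [degg_eq_sum, ← Finset.sum_mul, Nat.cast_sum]
  ring

theorem omg_nonneg (u : SVIdx d r →₀ ℕ) (i : Fin d) : 0 ≤ omg u i := by
  rw [omg_apply]
  exact Finset.sum_nonneg fun T _ =>
    mul_nonneg (Int.natCast_nonneg _) (chi_nonneg T i)

theorem chi_le_omg {u : SVIdx d r →₀ ℕ} {S : SVIdx d r} (hS : S ∈ u.support) (i : Fin d) :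
    chi S i ≤ omg u i := by
  rw [omg_apply]
  calc chi S i ≤ (u S : ℤ) * chi S i := by
        have h1 : (1 : ℤ) ≤ (u S : ℤ) := by
          have := Finsupp.mem_support_iff.mp hS
          omega
        nlinarith [chi_nonneg S i]
    _ ≤ _ := Finset.single_le_sum (f := fun T => (u T : ℤ) * chi T i)
        (fun T _ => mul_nonneg (Int.natCast_nonneg _) (chi_nonneg T i)) hS

theorem exists_mem_of_omg_pos {u : SVIdx d r →₀ ℕ} {i : Fin d} (h : 0 < omg u i) :
    ∃ T ∈ u.support, i ∈ T.1 := by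
  by_contra hno
  push_neg at hno
  rw [omg_apply] at h
  have : ∑ T ∈ u.support, (u T : ℤ) * chi T i = 0 := by
    apply Finset.sum_eq_zero
    intro T hT
    have : chi T i = 0 := by
      unfold chi
      rw [if_neg (hno T hT)]
    rw [this, mul_zero]
  omega

theorem mem_all_of_omg_eq_degg {u : SVIdx d r →₀ ℕ} {j : Fin d}
    (h : omg u j = (degg u : ℤ)) {T0 : SVIdx d r} (hT0 : T0 ∈ u.support) : j ∈ T0.1 := by
  by_contra hj
  have hchi : chi T0 j = 0 := by unfold chi; rw [if_neg hj]
  have h1 : omg u j = (u T0 : ℤ) * chi T0 j + ∑ T ∈ u.support.erase T0, (u T : ℤ) * chi T j := by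
    rw [omg_apply, ← Finset.add_sum_erase _ _ hT0]
  have h2 : (degg u : ℤ) = (u T0 : ℤ) + ∑ T ∈ u.support.erase T0, (u T : ℤ) := by
    rw [degg_eq_sum, Nat.cast_sum, ← Finset.add_sum_erase _ _ hT0]
  have h3 : ∑ T ∈ u.support.erase T0, (u T : ℤ) * chi T j
      ≤ ∑ T ∈ u.support.erase T0, (u T : ℤ) := by
    apply Finset.sum_le_sum
    intro T _
    nlinarith [chi_le_one T j, chi_nonneg T j, Int.natCast_nonneg (u T)]
  have h4 : (1:ℤ) ≤ (u T0 : ℤ) := by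
    have := Finsupp.mem_support_iff.mp hT0
    omega
  rw [hchi, mul_zero, zero_add] at h1
  omega

theorem degg_eq_zero_iff (u : SVIdx d r →₀ ℕ) : degg u = 0 ↔ u = 0 := by
  constructor
  · intro h
    ext T
    simp only [Finsupp.coe_zero, Pi.zero_apply]
    by_contra hT
    have hT' : T ∈ u.support := Finsupp.mem_support_iff.mpr hT
    have h1 : 1 ≤ u T := Nat.one_le_iff_ne_zero.mpr hT
    have h2 := Finset.single_le_sum (f := fun T => u T) (fun _ _ => Nat.zero_le _) hT'
    rw [degg_eq_sum] at h
    omega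
  · intro h; rw [h]; rfl

theorem degg_add (u v : SVIdx d r →₀ ℕ) : degg (u + v) = degg u + degg v := by
  unfold degg
  rw [Finsupp.sum_add_index] <;> simp

theorem degg_single (T : SVIdx d r) (n : ℕ) : degg (Finsupp.single T n) = n := by
  unfold degg
  rw [Finsupp.sum_single_index]; rfl

end

section
variable {d r : ℕ} {K : Type*} [Field K]

theorem coeff_binom (u v x : SVIdx d r →₀ ℕ) :
    coeff x (binom K u v) = (if u = x then (1:K) else 0) - (if v = x then 1 else 0) := by
  simp [binom, MvPolynomial.coeff_monomial]

theorem support_binom {u v : SVIdx d r →₀ ℕ} (h : u ≠ v) :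
    (binom K u v).support = {u, v} := by
  ext x
  rw [MvPolynomial.mem_support_iff, coeff_binom]
  constructor
  · intro hx
    by_contra hm
    simp only [Finset.mem_insert, Finset.mem_singleton] at hm
    push_neg at hm
    rw [if_neg (fun hh => hm.1 hh.symm), if_neg (fun hh => hm.2 hh.symm), sub_zero] at hx
    exact hx rfl
  · intro hx
    simp only [Finset.mem_insert, Finset.mem_singleton] at hx
    rcases hx with hx | hx
    · rw [if_pos hx.symm, if_neg (fun hh => h (hh.trans hx).symm)]
      norm_num
    · rw [if_pos hx.symm, if_neg (fun hh => h (hh.trans hx))]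
      norm_num

theorem vars_binom {u v : SVIdx d r →₀ ℕ} (h : u ≠ v) :
    (binom K u v).vars = u.support ∪ v.support := by
  ext i
  rw [MvPolynomial.mem_vars]
  constructor
  · rintro ⟨w, hw, hi⟩
    rw [support_binom h] at hw
    simp only [Finset.mem_insert, Finset.mem_singleton] at hw
    rcases hw with rfl | rfl
    · exact Finset.mem_union_left _ hi
    · exact Finset.mem_union_right _ hi
  · intro hi
    rcases Finset.mem_union.mp hi with hi | hi
    · exact ⟨u, by rw [support_binom h]; simp, hi⟩
    · exact ⟨v, by rw [support_binom h]; simp, hi⟩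

theorem sdiff_nonempty_of_ne {A B : SVIdx d r} (h : A ≠ B) : (A.1 \ B.1).Nonempty := by
  rw [Finset.sdiff_nonempty]
  intro hsub
  exact h (Subtype.ext (Finset.eq_of_subset_of_card_le hsub (by rw [A.2, B.2])))

theorem ind3 {A B C D : SVIdx d r} (hrel : ∀ i, chi A i + chi B i = chi C i + chi D i)
    (hAB : A ≠ B) (hCA : C ≠ A) (hCB : C ≠ B) {α β γ : ℤ}
    (h : ∀ i, α * chi A i + β * chi B i + γ * chi C i = 0) : α = 0 ∧ β = 0 ∧ γ = 0 := by
  obtain ⟨iA, hiA⟩ := sdiff_nonempty_of_ne hAB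
  obtain ⟨iB, hiB⟩ := sdiff_nonempty_of_ne hAB.symm
  obtain ⟨hiA1, hiA2⟩ := Finset.mem_sdiff.mp hiA
  obtain ⟨hiB1, hiB2⟩ := Finset.mem_sdiff.mp hiB
  have hCsub : C.1 ⊆ A.1 ∪ B.1 := by
    intro i hi
    have hr := hrel i
    rw [Finset.mem_union]
    by_contra hno
    push_neg at hno
    have hD := chi_nonneg D i
    simp [chi, hno.1, hno.2, hi] at hr
    omega
  have hABC : ∀ i, i ∈ A.1 → i ∈ B.1 → i ∈ C.1 := by
    intro i ha hb
    have hr := hrel i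
    by_contra hc
    have hD := chi_le_one D i
    simp [chi, ha, hb, hc] at hr
    omega
  have hγ : γ = 0 := by
    by_contra hγ
    have huniA : ∀ i1 ∈ A.1 \ B.1, ∀ i2 ∈ A.1 \ B.1, chi C i1 = chi C i2 := by
      intro i1 h1 i2 h2
      obtain ⟨h11, h12⟩ := Finset.mem_sdiff.mp h1
      obtain ⟨h21, h22⟩ := Finset.mem_sdiff.mp h2
      have e1 := h i1
      have e2 := h i2
      simp only [chi, if_pos h11, if_neg h12, if_pos h21, if_neg h22] at e1 e2 ⊢
      have : γ * ((if i1 ∈ C.1 then (1:ℤ) else 0) - (if i2 ∈ C.1 then 1 else 0)) = 0 := by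
        linarith
      rcases mul_eq_zero.mp this with h' | h'
      · exact absurd h' hγ
      · linarith
    have huniB : ∀ i1 ∈ B.1 \ A.1, ∀ i2 ∈ B.1 \ A.1, chi C i1 = chi C i2 := by
      intro i1 h1 i2 h2
      obtain ⟨h11, h12⟩ := Finset.mem_sdiff.mp h1
      obtain ⟨h21, h22⟩ := Finset.mem_sdiff.mp h2
      have e1 := h i1
      have e2 := h i2
      simp only [chi, if_pos h11, if_neg h12, if_pos h21, if_neg h22] at e1 e2 ⊢
      have : γ * ((if i1 ∈ C.1 then (1:ℤ) else 0) - (if i2 ∈ C.1 then 1 else 0)) = 0 := by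
        linarith
      rcases mul_eq_zero.mp this with h' | h'
      · exact absurd h' hγ
      · linarith
    -- uniform membership
    have hcaseA : (∀ i ∈ A.1 \ B.1, i ∈ C.1) ∨ (∀ i ∈ A.1 \ B.1, i ∉ C.1) := by
      by_cases hc : iA ∈ C.1
      · left
        intro i hi
        have := huniA i hi iA hiA
        simp only [chi, if_pos hc] at this
        by_contra hic
        rw [if_neg hic] at this
        norm_num at this
      · right
        intro i hi
        have := huniA i hi iA hiA
        simp only [chi, if_neg hc] at this
        intro hic
        rw [if_pos hic] at this
        norm_num at this
    have hcaseB : (∀ i ∈ B.1 \ A.1, i ∈ C.1) ∨ (∀ i ∈ B.1 \ A.1, i ∉ C.1) := by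
      by_cases hc : iB ∈ C.1
      · left
        intro i hi
        have := huniB i hi iB hiB
        simp only [chi, if_pos hc] at this
        by_contra hic
        rw [if_neg hic] at this
        norm_num at this
      · right
        intro i hi
        have := huniB i hi iB hiB
        simp only [chi, if_neg hc] at this
        intro hic
        rw [if_pos hic] at this
        norm_num at this
    rcases hcaseA with hA | hA <;> rcases hcaseB with hB | hB
    · -- C = A ∪ B, so A.1 = C.1
      have hCeq : C.1 = A.1 ∪ B.1 := by
        apply Finset.Subset.antisymm hCsub
        intro i hi
        rcases Finset.mem_union.mp hi with hi' | hi'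
        · by_cases hb : i ∈ B.1
          · exact hABC i hi' hb
          · exact hA i (Finset.mem_sdiff.mpr ⟨hi', hb⟩)
        · by_cases ha : i ∈ A.1
          · exact hABC i ha hi'
          · exact hB i (Finset.mem_sdiff.mpr ⟨hi', ha⟩)
      have hAsub : A.1 ⊆ C.1 := hCeq ▸ Finset.subset_union_left
      have : A.1 = C.1 := Finset.eq_of_subset_of_card_le hAsub (by rw [A.2, C.2])
      exact hCA (Subtype.ext this.symm)
    · -- C = A
      have hCeq : C.1 = A.1 := by
        apply Finset.Subset.antisymm
        · intro i hi
          rcases Finset.mem_union.mp (hCsub hi) with hi' | hi'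
          · exact hi'
          · by_cases ha : i ∈ A.1
            · exact ha
            · exact absurd hi (hB i (Finset.mem_sdiff.mpr ⟨hi', ha⟩))
        · intro i hi
          by_cases hb : i ∈ B.1
          · exact hABC i hi hb
          · exact hA i (Finset.mem_sdiff.mpr ⟨hi, hb⟩)
      exact hCA (Subtype.ext hCeq)
    · -- C = B
      have hCeq : C.1 = B.1 := by
        apply Finset.Subset.antisymm
        · intro i hi
          rcases Finset.mem_union.mp (hCsub hi) with hi' | hi'
          · by_cases hb : i ∈ B.1
            · exact hb
            · exact absurd hi (hA i (Finset.mem_sdiff.mpr ⟨hi', hb⟩))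
          · exact hi'
        · intro i hi
          by_cases ha : i ∈ A.1
          · exact hABC i ha hi
          · exact hB i (Finset.mem_sdiff.mpr ⟨hi, ha⟩)
      exact hCB (Subtype.ext hCeq)
    · -- C = A ∩ B : too small
      have hCeq : C.1 = A.1 ∩ B.1 := by
        apply Finset.Subset.antisymm
        · intro i hi
          rcases Finset.mem_union.mp (hCsub hi) with hi' | hi'
          · by_cases hb : i ∈ B.1
            · exact Finset.mem_inter.mpr ⟨hi', hb⟩
            · exact absurd hi (hA i (Finset.mem_sdiff.mpr ⟨hi', hb⟩))
          · by_cases ha : i ∈ A.1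
            · exact Finset.mem_inter.mpr ⟨ha, hi'⟩
            · exact absurd hi (hB i (Finset.mem_sdiff.mpr ⟨hi', ha⟩))
        · intro i hi
          exact hABC i (Finset.mem_inter.mp hi).1 (Finset.mem_inter.mp hi).2
      have hsub : C.1 ⊆ A.1 := hCeq ▸ Finset.inter_subset_left
      have : C.1 = A.1 := Finset.eq_of_subset_of_card_le hsub (by rw [A.2, C.2])
      exact hCA (Subtype.ext this)
  subst hγ
  have e1 := h iA
  have e2 := h iB
  simp only [chi, if_pos hiA1, if_neg hiA2, if_pos hiB1, if_neg hiB2, zero_mul] at e1 e2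
  constructor
  · linarith
  constructor
  · linarith
  · rfl

end


section
variable {K : Type*} [Field K] {τ : Type*} [DecidableEq τ]

theorem irred_linear {R : Type*} [CommRing R] [IsDomain R] {u w : R} (hu : u ≠ 0)
    (hcop : ∀ s : R, s ∣ u → s ∣ w → IsUnit s) :
    Irreducible (Polynomial.C u * Polynomial.X + Polynomial.C w) := by
  set p := Polynomial.C u * Polynomial.X + Polynomial.C w with hp
  have hdeg : p.natDegree = 1 := Polynomial.natDegree_linear hu
  have hc1 : p.coeff 1 = u := by simp [hp]
  have hc0 : p.coeff 0 = w := by simp [hp]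
  constructor
  · intro hunit
    have := Polynomial.natDegree_eq_zero_of_isUnit hunit
    omega
  · intro g h hgh
    have hp0 : p ≠ 0 := fun h0 => by rw [h0] at hdeg; simp at hdeg
    have hg0 : g ≠ 0 := fun h0 => hp0 (by rw [hgh, h0, zero_mul])
    have hh0 : h ≠ 0 := fun h0 => hp0 (by rw [hgh, h0, mul_zero])
    have hsum : g.natDegree + h.natDegree = 1 := by
      rw [← Polynomial.natDegree_mul hg0 hh0, ← hgh, hdeg]
    rcases Nat.add_eq_one_iff.mp hsum with ⟨hg1, _⟩ | ⟨_, hh1⟩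
    · left
      obtain ⟨s, hs⟩ := Polynomial.natDegree_eq_zero.mp hg1
      have hsu : u = h.coeff 1 * s := by
        rw [← hc1, hgh, ← hs, mul_comm, Polynomial.coeff_mul_C]
      have hsw : w = h.coeff 0 * s := by
        rw [← hc0, hgh, ← hs, mul_comm, Polynomial.coeff_mul_C]
      have : IsUnit s := hcop s ⟨h.coeff 1, by rw [hsu]; ring⟩ ⟨h.coeff 0, by rw [hsw]; ring⟩
      rw [← hs]
      exact Polynomial.isUnit_C.mpr this
    · right
      obtain ⟨s, hs⟩ := Polynomial.natDegree_eq_zero.mp hh1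
      have hsu : u = g.coeff 1 * s := by
        rw [← hc1, hgh, ← hs, Polynomial.coeff_mul_C]
      have hsw : w = g.coeff 0 * s := by
        rw [← hc0, hgh, ← hs, Polynomial.coeff_mul_C]
      have : IsUnit s := hcop s ⟨g.coeff 1, by rw [hsu]; ring⟩ ⟨g.coeff 0, by rw [hsw]; ring⟩
      rw [← hs]
      exact Polynomial.isUnit_C.mpr this

theorem X_mul_X_eq_monomial (c d : τ) :
    (MvPolynomial.X c * MvPolynomial.X d : MvPolynomial τ K) =
      MvPolynomial.monomial (Finsupp.single c 1 + Finsupp.single d 1) 1 := by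
  rw [show (MvPolynomial.X c : MvPolynomial τ K)
      = MvPolynomial.monomial (Finsupp.single c 1) 1 from rfl,
    show (MvPolynomial.X d : MvPolynomial τ K)
      = MvPolynomial.monomial (Finsupp.single d 1) 1 from rfl,
    MvPolynomial.monomial_mul, one_mul]

theorem common_dvd_isUnit {b c d : τ} (hbc : b ≠ c) (hbd : b ≠ d)
    {s : MvPolynomial τ K} (h1 : s ∣ MvPolynomial.X b)
    (h2 : s ∣ MvPolynomial.X c * MvPolynomial.X d) :
    IsUnit s := by
  set e := (renameEquiv K (Equiv.optionSubtypeNe b).symm).trans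
    (optionEquivLeft K {x : τ // x ≠ b}) with he
  have heb : e (MvPolynomial.X b) = Polynomial.X := by
    rw [he]
    simp only [AlgEquiv.trans_apply, renameEquiv_apply, rename_X]
    rw [Equiv.optionSubtypeNe_symm_self]
    exact optionEquivLeft_X_none K _
  have h1' : e s ∣ Polynomial.X := by
    rw [← heb]
    exact map_dvd e.toAlgHom h1
  obtain ⟨t, ht⟩ := h1'
  rcases (Polynomial.prime_X
      (R := MvPolynomial {x : τ // x ≠ b} K)).irreducible.isUnit_or_isUnit ht with hunit | hunit
  · have : IsUnit (e.symm (e s)) := hunit.map e.symm.toAlgHom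
    rwa [AlgEquiv.symm_apply_apply] at this
  · exfalso
    have hXdvd : Polynomial.X ∣ e s := by
      obtain ⟨t', htt'⟩ := hunit.exists_right_inv
      refine ⟨t', ?_⟩
      have h3 : Polynomial.X * t' = e s * (t * t') := by rw [ht]; ring
      rw [htt', mul_one] at h3
      exact h3.symm
    have hXbs : MvPolynomial.X b ∣ s := by
      obtain ⟨t', ht'⟩ := hXdvd
      refine ⟨e.symm t', ?_⟩
      have h4 : s = e.symm (e s) := (AlgEquiv.symm_apply_apply e s).symm
      rw [h4, ht', map_mul]
      congr 1
      rw [← heb, AlgEquiv.symm_apply_apply]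
    have hfin : MvPolynomial.X b ∣ MvPolynomial.X c * MvPolynomial.X d := hXbs.trans h2
    rw [X_mul_X_eq_monomial, MvPolynomial.X_dvd_monomial] at hfin
    rcases hfin with h' | h'
    · exact one_ne_zero h'
    · apply h'
      simp [Finsupp.single_apply, Ne.symm hbc, Ne.symm hbd]

theorem irreducible_quad {a b c d : τ} (hab : a ≠ b) (hac : a ≠ c) (had : a ≠ d)
    (hbc : b ≠ c) (hbd : b ≠ d) (hcd : c ≠ d) :
    Irreducible (MvPolynomial.X a * MvPolynomial.X b - MvPolynomial.X c * MvPolynomial.X d :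
      MvPolynomial τ K) := by
  set e := (renameEquiv K (Equiv.optionSubtypeNe a).symm).trans
    (optionEquivLeft K {x : τ // x ≠ a}) with he
  apply (MulEquiv.irreducible_iff (e : MvPolynomial τ K ≃*
    Polynomial (MvPolynomial {x : τ // x ≠ a} K))).mp
  have hXa : e (MvPolynomial.X a) = Polynomial.X := by
    rw [he]
    simp only [AlgEquiv.trans_apply, renameEquiv_apply, rename_X]
    rw [Equiv.optionSubtypeNe_symm_self]
    exact optionEquivLeft_X_none K _
  have hXother : ∀ (x : τ) (hx : x ≠ a),
      e (MvPolynomial.X x) = Polynomial.C (MvPolynomial.X (⟨x, hx⟩ : {x : τ // x ≠ a})) := by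
    intro x hx
    rw [he]
    simp only [AlgEquiv.trans_apply, renameEquiv_apply, rename_X]
    rw [Equiv.optionSubtypeNe_symm_of_ne hx]
    exact optionEquivLeft_X_some K _ _
  have himg : e (MvPolynomial.X a * MvPolynomial.X b
        - MvPolynomial.X c * MvPolynomial.X d) =
      Polynomial.C (MvPolynomial.X (⟨b, Ne.symm hab⟩ : {x : τ // x ≠ a})) * Polynomial.X +
        Polynomial.C (-(MvPolynomial.X (⟨c, Ne.symm hac⟩ : {x : τ // x ≠ a}) *
          MvPolynomial.X (⟨d, Ne.symm had⟩ : {x : τ // x ≠ a}))) := by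
    rw [map_sub, map_mul, map_mul, hXa, hXother b (Ne.symm hab), hXother c (Ne.symm hac),
      hXother d (Ne.symm had), map_neg, map_mul]
    ring
  show Irreducible (e (MvPolynomial.X a * MvPolynomial.X b
    - MvPolynomial.X c * MvPolynomial.X d))
  rw [himg]
  apply irred_linear (MvPolynomial.X_ne_zero _)
  intro s hsu hsw
  rw [dvd_neg] at hsw
  exact common_dvd_isUnit (fun h => hbc (congrArg Subtype.val h))
    (fun h => hbd (congrArg Subtype.val h)) hsu hsw

end



section
variable {d r : ℕ} {K : Type*} [Field K]

theorem omg_apply_subset {u : SVIdx d r →₀ ℕ} {s : Finset (SVIdx d r)}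
    (hsub : u.support ⊆ s) (i : Fin d) :
    omg u i = ∑ T ∈ s, (u T : ℤ) * chi T i := by
  rw [omg_apply]
  exact Finset.sum_subset hsub
    (fun T _ hT => by simp [Finsupp.notMem_support_iff.mp hT])

theorem eq_of_supports_in_triple {A B C : SVIdx d r} {u' v' : SVIdx d r →₀ ℕ}
    (homg : omg u' = omg v')
    (hind : ∀ α β γ : ℤ, (∀ i, α * chi A i + β * chi B i + γ * chi C i = 0) →
      α = 0 ∧ β = 0 ∧ γ = 0)
    (hAB : A ≠ B) (hAC : A ≠ C) (hBC : B ≠ C)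
    (hu : u'.support ⊆ {A, B, C}) (hv : v'.support ⊆ {A, B, C}) : u' = v' := by
  have expand : ∀ w : SVIdx d r →₀ ℕ, w.support ⊆ {A, B, C} → ∀ i,
      omg w i = (w A : ℤ) * chi A i + (w B : ℤ) * chi B i + (w C : ℤ) * chi C i := by
    intro w hw i
    rw [omg_apply_subset hw i]
    rw [Finset.sum_insert (by simp [hAB, hAC]), Finset.sum_insert (by simp [hBC]),
      Finset.sum_singleton]
    ring
  have hsum : ∀ i, ((u' A : ℤ) - v' A) * chi A i + ((u' B : ℤ) - v' B) * chi B i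
      + ((u' C : ℤ) - v' C) * chi C i = 0 := by
    intro i
    have h1 := expand u' hu i
    have h2 := expand v' hv i
    have h3 : omg u' i = omg v' i := by rw [homg]
    rw [h1, h2] at h3
    linarith
  obtain ⟨hA, hB, hC⟩ := hind _ _ _ hsum
  have hAe : u' A = v' A := by omega
  have hBe : u' B = v' B := by omega
  have hCe : u' C = v' C := by omega
  ext T
  by_cases hT : T ∈ ({A, B, C} : Finset (SVIdx d r))
  · simp only [Finset.mem_insert, Finset.mem_singleton] at hT
    rcases hT with rfl | rfl | rfl <;> assumption
  · have h1 : u' T = 0 := Finsupp.notMem_support_iff.mp (fun hc => hT (hu hc))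
    have h2 : v' T = 0 := Finsupp.notMem_support_iff.mp (fun hc => hT (hv hc))
    rw [h1, h2]

theorem pair_support {T T' : SVIdx d r} (h : T ≠ T') :
    (Finsupp.single T 1 + Finsupp.single T' 1).support = {T, T'} := by
  have hd : Disjoint (Finsupp.single T (1:ℕ)).support (Finsupp.single T' (1:ℕ)).support := by
    rw [Finsupp.support_single_ne_zero _ one_ne_zero,
      Finsupp.support_single_ne_zero _ one_ne_zero, Finset.disjoint_singleton]
    exact h
  rw [Finsupp.support_add_eq hd, Finsupp.support_single_ne_zero _ one_ne_zero,
    Finsupp.support_single_ne_zero _ one_ne_zero, ← Finset.insert_eq]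

theorem pair_apply (T T' x : SVIdx d r) :
    ((Finsupp.single T 1 + Finsupp.single T' 1 : SVIdx d r →₀ ℕ)) x
      = (if T = x then 1 else 0) + (if T' = x then 1 else 0) := by
  rw [Finsupp.add_apply, Finsupp.single_apply, Finsupp.single_apply]

theorem monomial_pair_eq (T T' : SVIdx d r) :
    (MvPolynomial.monomial (Finsupp.single T 1 + Finsupp.single T' 1) (1:K))
      = MvPolynomial.X T * MvPolynomial.X T' := by
  rw [X_mul_X_eq_monomial]

theorem quad_mem_circuits {T1 T2 T1' T2' : SVIdx d r}
    (h12 : T1 ≠ T2) (hne1 : T1' ≠ T1) (hne2 : T1' ≠ T2)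
    (hch : ∀ i, chi T1 i + chi T2 i = chi T1' i + chi T2' i) :
    binom K (Finsupp.single T1 1 + Finsupp.single T2 1)
      (Finsupp.single T1' 1 + Finsupp.single T2' 1)
      ∈ CircuitsSFSF K (toricIdeal K (SVconfig d r)) := by
  -- remaining distinctness facts
  have h12' : T1' ≠ T2' := by
    intro he
    obtain ⟨i0, hi0⟩ := sdiff_nonempty_of_ne h12
    obtain ⟨hi1, hi2⟩ := Finset.mem_sdiff.mp hi0
    have := hch i0
    rw [← he] at this
    simp only [chi, if_pos hi1, if_neg hi2] at this
    by_cases hc : i0 ∈ T1'.1 <;> simp [hc] at this <;> omega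
  have hne3 : T2' ≠ T1 := by
    intro he
    apply hne2
    apply chi_inj
    funext i
    have := hch i
    rw [he] at this
    linarith
  have hne4 : T2' ≠ T2 := by
    intro he
    apply hne1
    apply chi_inj
    funext i
    have := hch i
    rw [he] at this
    linarith
  set u0 := Finsupp.single T1 1 + Finsupp.single T2 1 with hu0
  set v0 := Finsupp.single T1' 1 + Finsupp.single T2' 1 with hv0
  have huv : u0 ≠ v0 := by
    intro he
    have h1 : u0 T1 = v0 T1 := by rw [he]
    rw [hu0, hv0, pair_apply, pair_apply, if_pos rfl, if_neg (fun hh => h12 hh.symm),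
      if_neg (fun hh => hne1 hh), if_neg (fun hh => hne3 hh)] at h1
    simp at h1
  have homg : omg u0 = omg v0 := by
    rw [hu0, hv0, omg_add, omg_add, omg_single, omg_single, omg_single, omg_single]
    funext i
    have := hch i
    simp only [Pi.add_apply, one_smul]
    linarith
  have hmem : binom K u0 v0 ∈ toricIdeal K (SVconfig d r) := binom_mem_toricIdeal homg
  refine ⟨⟨⟨u0, v0, huv, rfl⟩, hmem, ?_, ?_⟩, u0, v0, huv, rfl, ?_, ?_⟩
  · -- irreducible
    have hform : binom K u0 v0 = MvPolynomial.X T1 * MvPolynomial.X T2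
        - MvPolynomial.X T1' * MvPolynomial.X T2' := by
      rw [binom, hu0, hv0, monomial_pair_eq, monomial_pair_eq]
    rw [hform]
    exact irreducible_quad h12 (Ne.symm hne1) (Ne.symm hne3) (Ne.symm hne2)
      (Ne.symm hne4) h12'
  · -- minimal support
    intro g hg hbin hss
    obtain ⟨u', v', huv', hgb⟩ := hbin
    have homg' : omg u' = omg v' := omg_eq_of_binom_mem (hgb ▸ hg)
    have hvarsf : (binom K u0 v0).vars = {T1, T2, T1', T2'} := by
      rw [vars_binom huv, hu0, hv0, pair_support h12, pair_support h12']
      ext x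
      simp only [Finset.mem_union, Finset.mem_insert, Finset.mem_singleton]
      tauto
    have hvarsg : g.vars = u'.support ∪ v'.support := hgb ▸ vars_binom huv'
    obtain ⟨x, hxf, hxg⟩ := Finset.exists_of_ssubset hss
    have hsubg : ∀ T, T ∈ u'.support ∪ v'.support → T ∈ ({T1, T2, T1', T2'} : Finset _)
        ∧ T ≠ x := by
      intro T hT
      have hTg : T ∈ g.vars := hvarsg ▸ hT
      exact ⟨hvarsf ▸ hss.subset hTg, fun he => hxg (he ▸ hTg)⟩
    rw [hvarsf] at hxf
    simp only [Finset.mem_insert, Finset.mem_singleton] at hxf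
    -- helper for support inclusion
    have hsupp3 : ∀ (A B C : SVIdx d r), ({T1, T2, T1', T2'} : Finset _) \ {x} ⊆ {A, B, C} →
        u'.support ⊆ {A, B, C} ∧ v'.support ⊆ {A, B, C} := by
      intro A B C hincl
      constructor <;> intro T hT
      · have := hsubg T (Finset.mem_union_left _ hT)
        exact hincl (Finset.mem_sdiff.mpr ⟨this.1, by simp [this.2]⟩)
      · have := hsubg T (Finset.mem_union_right _ hT)
        exact hincl (Finset.mem_sdiff.mpr ⟨this.1, by simp [this.2]⟩)
    apply huv'
    rcases hxf with hx | hx | hx | hx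
    · -- missing T1 : triple (T1', T2', T2)
      obtain ⟨hu1, hv1⟩ := hsupp3 T1' T2' T2 (by intro y hy; simp [hx] at hy ⊢; tauto)
      exact eq_of_supports_in_triple homg'
        (fun α β γ hh => ind3 (A := T1') (B := T2') (C := T2) (D := T1)
          (fun i => by have := hch i; linarith) h12' (Ne.symm hne2) (Ne.symm hne4) hh)
        h12' hne2 hne4 hu1 hv1
    · -- missing T2 : triple (T1', T2', T1)
      obtain ⟨hu1, hv1⟩ := hsupp3 T1' T2' T1 (by intro y hy; simp [hx] at hy ⊢; tauto)
      exact eq_of_supports_in_triple homg'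
        (fun α β γ hh => ind3 (A := T1') (B := T2') (C := T1) (D := T2)
          (fun i => by have := hch i; linarith) h12' (Ne.symm hne1) (Ne.symm hne3) hh)
        h12' hne1 hne3 hu1 hv1
    · -- missing T1' : triple (T1, T2, T2')
      obtain ⟨hu1, hv1⟩ := hsupp3 T1 T2 T2' (by intro y hy; simp [hx] at hy ⊢; tauto)
      exact eq_of_supports_in_triple homg'
        (fun α β γ hh => ind3 (A := T1) (B := T2) (C := T2') (D := T1')
          (fun i => by have := hch i; linarith) h12 hne3 hne4 hh)
        h12 (Ne.symm hne3) (Ne.symm hne4) hu1 hv1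
    · -- missing T2' : triple (T1, T2, T1')
      obtain ⟨hu1, hv1⟩ := hsupp3 T1 T2 T1' (by intro y hy; simp [hx] at hy ⊢; tauto)
      exact eq_of_supports_in_triple homg'
        (fun α β γ hh => ind3 (A := T1) (B := T2) (C := T1') (D := T2')
          (fun i => hch i) h12 hne1 hne2 hh)
        h12 (Ne.symm hne1) (Ne.symm hne2) hu1 hv1
  · -- squarefree u0
    intro x
    rw [hu0, pair_apply]
    by_cases h1 : T1 = x
    · rw [if_pos h1, if_neg (fun hh => h12 (h1.trans hh.symm))]
    · rw [if_neg h1]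
      split <;> omega
  · -- squarefree v0
    intro x
    rw [hv0, pair_apply]
    by_cases h1 : T1' = x
    · rw [if_pos h1, if_neg (fun hh => h12' (h1.trans hh.symm))]
    · rw [if_neg h1]
      split <;> omega

end



section
variable {d r : ℕ} {K : Type*} [Field K]

theorem binom_self (u : SVIdx d r →₀ ℕ) : binom K u u = 0 := sub_self _

theorem binom_add_binom (u v w : SVIdx d r →₀ ℕ) :
    binom K u v + binom K v w = binom K u w := by
  unfold binom; ring

/-- The new multiset after a pair move. -/
noncomputable def moveV (v : SVIdx d r →₀ ℕ) (T1 T2 T1' T2' : SVIdx d r) : SVIdx d r →₀ ℕ :=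
  v - Finsupp.single T1 1 - Finsupp.single T2 1
    + (Finsupp.single T1' 1 + Finsupp.single T2' 1)

theorem moveV_apply (v : SVIdx d r →₀ ℕ) (T1 T2 T1' T2' T : SVIdx d r) :
    moveV v T1 T2 T1' T2' T = v T - (if T1 = T then 1 else 0) - (if T2 = T then 1 else 0)
      + ((if T1' = T then 1 else 0) + (if T2' = T then 1 else 0)) := by
  unfold moveV
  simp only [Finsupp.add_apply, Finsupp.tsub_apply, Finsupp.single_apply]

theorem decomp_two {v : SVIdx d r →₀ ℕ} {T1 T2 : SVIdx d r}
    (h1 : T1 ∈ v.support) (h2 : T2 ∈ v.support) (h12 : T1 ≠ T2) :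
    v = (v - Finsupp.single T1 1 - Finsupp.single T2 1)
      + (Finsupp.single T1 1 + Finsupp.single T2 1) := by
  have hv1 : v T1 ≠ 0 := Finsupp.mem_support_iff.mp h1
  have hv2 : v T2 ≠ 0 := Finsupp.mem_support_iff.mp h2
  ext T
  simp only [Finsupp.add_apply, Finsupp.tsub_apply, Finsupp.single_apply]
  by_cases e1 : T1 = T <;> by_cases e2 : T2 = T
  · exact absurd (e1.trans e2.symm) h12
  · subst e1
    rw [if_pos rfl, if_neg e2]
    omega
  · subst e2
    rw [if_neg e1, if_pos rfl]
    omega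
  · rw [if_neg e1, if_neg e2]
    omega

theorem moveV_decomp {v : SVIdx d r →₀ ℕ} {T1 T2 : SVIdx d r} (T1' T2' : SVIdx d r)
    (h1 : T1 ∈ v.support) (h2 : T2 ∈ v.support) (h12 : T1 ≠ T2) :
    moveV v T1 T2 T1' T2' = (v - Finsupp.single T1 1 - Finsupp.single T2 1)
      + (Finsupp.single T1' 1 + Finsupp.single T2' 1) := rfl

end


section
variable {d r : ℕ} {K : Type*} [Field K]

theorem omg_moveV {v : SVIdx d r →₀ ℕ} {T1 T2 T1' T2' : SVIdx d r}
    (h1 : T1 ∈ v.support) (h2 : T2 ∈ v.support) (h12 : T1 ≠ T2)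
    (hch : ∀ i, chi T1 i + chi T2 i = chi T1' i + chi T2' i) :
    omg (moveV v T1 T2 T1' T2') = omg v := by
  have hv : omg (v - Finsupp.single T1 1 - Finsupp.single T2 1)
      + omg (Finsupp.single T1 1 + Finsupp.single T2 1) = omg v := by
    rw [← omg_add, ← decomp_two h1 h2 h12]
  have hm : omg (moveV v T1 T2 T1' T2')
      = omg (v - Finsupp.single T1 1 - Finsupp.single T2 1)
        + omg (Finsupp.single T1' 1 + Finsupp.single T2' 1) := by
    rw [moveV, omg_add]
  rw [hm, ← hv]
  congr 1
  rw [omg_add, omg_add, omg_single, omg_single, omg_single, omg_single]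
  funext x
  have := hch x
  simp only [Pi.add_apply, one_smul]
  linarith

theorem binom_moveV_mem {v : SVIdx d r →₀ ℕ} {T1 T2 T1' T2' : SVIdx d r}
    (h1 : T1 ∈ v.support) (h2 : T2 ∈ v.support) (h12 : T1 ≠ T2)
    (hne1 : T1' ≠ T1) (hne2 : T1' ≠ T2)
    (hch : ∀ i, chi T1 i + chi T2 i = chi T1' i + chi T2' i) :
    binom K v (moveV v T1 T2 T1' T2')
      ∈ Ideal.span (CircuitsSFSF K (toricIdeal K (SVconfig d r))) := by
  have key : binom K v (moveV v T1 T2 T1' T2')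
      = MvPolynomial.monomial (v - Finsupp.single T1 1 - Finsupp.single T2 1) (1:K)
        * binom K (Finsupp.single T1 1 + Finsupp.single T2 1)
          (Finsupp.single T1' 1 + Finsupp.single T2' 1) := by
    have hv := decomp_two h1 h2 h12
    set w := v - Finsupp.single T1 1 - Finsupp.single T2 1 with hw
    rw [binom, binom,
      show moveV v T1 T2 T1' T2' = w + (Finsupp.single T1' 1 + Finsupp.single T2' 1) from rfl,
      mul_sub, MvPolynomial.monomial_mul, MvPolynomial.monomial_mul, mul_one]
    nth_rewrite 1 [hv]
    rfl
  rw [key]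
  exact Ideal.mul_mem_left _ _ (Ideal.subset_span (quad_mem_circuits h12 hne1 hne2 hch))

theorem step1 {S : SVIdx d r} {v : SVIdx d r →₀ ℕ} {T1 T2 : SVIdx d r} {i j : Fin d}
    (h1 : T1 ∈ v.support) (h2 : T2 ∈ v.support)
    (hiS : i ∈ S.1) (hiT2 : i ∈ T2.1) (hiT1 : i ∉ T1.1)
    (hjT1 : j ∈ T1.1) (hjT2 : j ∉ T2.1) (hjS : j ∉ S.1) :
    ∃ v' : SVIdx d r →₀ ℕ, omg v' = omg v ∧
      binom K v v' ∈ Ideal.span (CircuitsSFSF K (toricIdeal K (SVconfig d r))) ∧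
      ∃ R ∈ v'.support, (S.1 ∩ T1.1).card < (S.1 ∩ R.1).card := by
  have h12 : T1 ≠ T2 := fun he => hiT1 (he ▸ hiT2)
  set U : Finset (Fin d) := T1.1 ∪ T2.1 with hU
  set B : Finset (Fin d) := (T1.1 ∩ T2.1) ∪ (S.1 ∩ T1.1) ∪ {i} with hB
  have hBsub : B ⊆ U := by
    intro x hx
    rw [hB] at hx
    rw [hU, Finset.mem_union]
    rcases Finset.mem_union.mp hx with hx' | hx'
    · rcases Finset.mem_union.mp hx' with hx'' | hx''
      · exact Or.inl (Finset.mem_inter.mp hx'').1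
      · exact Or.inl (Finset.mem_inter.mp hx'').2
    · rw [Finset.mem_singleton.mp hx']
      exact Or.inr hiT2
  have hr1 : 1 ≤ r := by
    rw [← T1.2]
    exact Finset.card_pos.mpr ⟨j, hjT1⟩
  have hBcard : B.card ≤ r := by
    have hsub' : B ⊆ (T1.1 \ {j}) ∪ {i} := by
      intro x hx
      rw [hB] at hx
      rw [Finset.mem_union]
      rcases Finset.mem_union.mp hx with hx' | hx'
      · left
        rcases Finset.mem_union.mp hx' with hx'' | hx''
        · obtain ⟨ha, hb⟩ := Finset.mem_inter.mp hx''
          exact Finset.mem_sdiff.mpr ⟨ha, fun hc => hjT2 ((Finset.mem_singleton.mp hc) ▸ hb)⟩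
        · obtain ⟨ha, hb⟩ := Finset.mem_inter.mp hx''
          exact Finset.mem_sdiff.mpr ⟨hb, fun hc => hjS ((Finset.mem_singleton.mp hc) ▸ ha)⟩
      · exact Or.inr hx'
    have hc1 : (T1.1 \ {j}).card = r - 1 := by
      rw [Finset.card_sdiff_of_subset (Finset.singleton_subset_iff.mpr hjT1), T1.2, Finset.card_singleton]
    have := Finset.card_le_card hsub'
    have := Finset.card_union_le (T1.1 \ {j}) ({i} : Finset (Fin d))
    rw [hc1] at *
    simp only [Finset.card_singleton] at *
    omega
  have hUcard : U.card + (T1.1 ∩ T2.1).card = r + r := by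
    have := Finset.card_union_add_card_inter T1.1 T2.1
    rw [T1.2, T2.2] at this
    exact this
  have htle : (T1.1 ∩ T2.1).card ≤ r := by
    have := Finset.card_le_card (Finset.inter_subset_left : T1.1 ∩ T2.1 ⊆ T1.1)
    rw [T1.2] at this
    exact this
  have hrU : r ≤ U.card := by
    have := Finset.card_le_card (Finset.subset_union_left : T1.1 ⊆ T1.1 ∪ T2.1)
    rw [T1.2] at this
    exact this
  obtain ⟨A, hBA, hAU, hAcard⟩ := Finset.exists_subsuperset_card_eq (n := r - B.card + B.card)
    hBsub (by omega) (by omega)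
  have hAr : A.card = r := by omega
  have hIA : T1.1 ∩ T2.1 ⊆ A := fun x hx =>
    hBA (Finset.mem_union_left _ (Finset.mem_union_left _ hx))
  have hiB : i ∈ B := Finset.mem_union_right _ (Finset.mem_singleton_self i)
  have hiA : i ∈ A := hBA hiB
  have hST1A : S.1 ∩ T1.1 ⊆ A := fun x hx =>
    hBA (Finset.mem_union_left _ (Finset.mem_union_right _ hx))
  have hdisj : Disjoint (U \ A) (T1.1 ∩ T2.1) := by
    rw [Finset.disjoint_left]
    intro x hx hx'
    exact (Finset.mem_sdiff.mp hx).2 (hIA hx')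
  have hT2'card : ((U \ A) ∪ (T1.1 ∩ T2.1)).card = r := by
    rw [Finset.card_union_of_disjoint hdisj, Finset.card_sdiff_of_subset hAU, hAr]
    omega
  set T1' : SVIdx d r := ⟨A, hAr⟩ with hT1'
  set T2' : SVIdx d r := ⟨(U \ A) ∪ (T1.1 ∩ T2.1), hT2'card⟩ with hT2'
  have hch : ∀ x, chi T1 x + chi T2 x = chi T1' x + chi T2' x := by
    intro x
    have hmU : x ∈ U ↔ x ∈ T1.1 ∨ x ∈ T2.1 := by rw [hU, Finset.mem_union]
    have hm2' : x ∈ T2'.1 ↔ ((x ∈ U ∧ x ∉ A) ∨ (x ∈ T1.1 ∧ x ∈ T2.1)) := by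
      rw [hT2']
      simp only [Finset.mem_union, Finset.mem_sdiff, Finset.mem_inter]
    unfold chi
    by_cases m1 : x ∈ T1.1 <;> by_cases m2 : x ∈ T2.1 <;> by_cases mA : x ∈ A
    · rw [if_pos m1, if_pos m2, if_pos (show x ∈ T1'.1 from mA),
        if_pos (hm2'.mpr (Or.inr ⟨m1, m2⟩))]
    · exact absurd (hIA (Finset.mem_inter.mpr ⟨m1, m2⟩)) mA
    · rw [if_pos m1, if_neg m2, if_pos (show x ∈ T1'.1 from mA),
        if_neg (fun hc => by
          rcases hm2'.mp hc with ⟨_, h⟩ | ⟨_, h⟩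
          exacts [h mA, m2 h])]
    · rw [if_pos m1, if_neg m2, if_neg (show x ∉ T1'.1 from mA),
        if_pos (hm2'.mpr (Or.inl ⟨hmU.mpr (Or.inl m1), mA⟩))]
      ring
    · rw [if_neg m1, if_pos m2, if_pos (show x ∈ T1'.1 from mA),
        if_neg (fun hc => by
          rcases hm2'.mp hc with ⟨_, h⟩ | ⟨h, _⟩
          exacts [h mA, m1 h])]
      ring
    · rw [if_neg m1, if_pos m2, if_neg (show x ∉ T1'.1 from mA),
        if_pos (hm2'.mpr (Or.inl ⟨hmU.mpr (Or.inr m2), mA⟩))]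
    · exact absurd (hmU.mp (hAU mA)) (by tauto)
    · rw [if_neg m1, if_neg m2, if_neg (show x ∉ T1'.1 from mA),
        if_neg (fun hc => by
          rcases hm2'.mp hc with ⟨h, _⟩ | ⟨h, _⟩
          exacts [(by tauto : ¬(x ∈ U)) h, m1 h])]
  have hne1 : T1' ≠ T1 := by
    intro he
    apply hiT1
    have : T1'.1 = T1.1 := congrArg Subtype.val he
    exact this ▸ hiA
  have hScard : (S.1 ∩ T1.1).card < (S.1 ∩ A).card := by
    have hins : insert i (S.1 ∩ T1.1) ⊆ S.1 ∩ A := by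
      intro x hx
      rcases Finset.mem_insert.mp hx with rfl | hx'
      · exact Finset.mem_inter.mpr ⟨hiS, hiA⟩
      · exact Finset.mem_inter.mpr ⟨(Finset.mem_inter.mp hx').1, hST1A hx'⟩
    have hnotmem : i ∉ S.1 ∩ T1.1 := fun hc => hiT1 (Finset.mem_inter.mp hc).2
    have := Finset.card_le_card hins
    rw [Finset.card_insert_of_notMem hnotmem] at this
    omega
  by_cases hT1'T2 : T1' = T2
  · refine ⟨v, rfl, by rw [binom_self]; exact Ideal.zero_mem _, T2, h2, ?_⟩
    have : T2.1 = A := (congrArg Subtype.val hT1'T2).symm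
    rw [this]
    exact hScard
  · refine ⟨moveV v T1 T2 T1' T2', omg_moveV h1 h2 h12 hch,
      binom_moveV_mem h1 h2 h12 hne1 hT1'T2 hch, T1', ?_, hScard⟩
    rw [Finsupp.mem_support_iff, moveV_apply]
    rw [if_neg (fun hh => hne1 hh.symm), if_neg (fun hh => hT1'T2 hh.symm), if_pos rfl]
    omega

end


section
variable {d r : ℕ} {K : Type*} [Field K]

theorem omg_zero : omg (0 : SVIdx d r →₀ ℕ) = 0 := by
  unfold omg
  simp

theorem decomp_one {v : SVIdx d r →₀ ℕ} {S : SVIdx d r} (h : S ∈ v.support) :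
    v = Finsupp.single S 1 + (v - Finsupp.single S 1) := by
  have hv : v S ≠ 0 := Finsupp.mem_support_iff.mp h
  ext T
  simp only [Finsupp.add_apply, Finsupp.tsub_apply, Finsupp.single_apply]
  by_cases e : S = T
  · subst e; rw [if_pos rfl]; omega
  · rw [if_neg e]; omega

/-- The maximum size of the intersection of `S` with a member of `v`. -/
noncomputable def pmax (S : SVIdx d r) (v : SVIdx d r →₀ ℕ) : ℕ :=
  v.support.sup fun T => (S.1 ∩ T.1).card

theorem le_pmax {S R : SVIdx d r} {v : SVIdx d r →₀ ℕ} (hR : R ∈ v.support) :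
    (S.1 ∩ R.1).card ≤ pmax S v :=
  Finset.le_sup (f := fun T => (S.1 ∩ T.1).card) hR

theorem pmax_le (S : SVIdx d r) (v : SVIdx d r →₀ ℕ) : pmax S v ≤ r := by
  apply Finset.sup_le
  intro T _
  have : S.1 ∩ T.1 ⊆ S.1 := Finset.inter_subset_left
  have := Finset.card_le_card this
  rw [S.2] at this
  exact this

theorem pair_move {v : SVIdx d r →₀ ℕ} {T1 T2 : SVIdx d r} {A : Finset (Fin d)}
    (h1 : T1 ∈ v.support) (h2 : T2 ∈ v.support) (h12 : T1 ≠ T2)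
    (hIA : T1.1 ∩ T2.1 ⊆ A) (hAU : A ⊆ T1.1 ∪ T2.1) (hAr : A.card = r)
    (hne1 : A ≠ T1.1) (hne2 : A ≠ T2.1) :
    ∃ v', omg v' = omg v ∧
      binom K v v' ∈ Ideal.span (CircuitsSFSF K (toricIdeal K (SVconfig d r))) ∧
      (⟨A, hAr⟩ : SVIdx d r) ∈ v'.support ∧
      ∀ T, T ≠ T1 → T ≠ T2 → v T ≤ v' T := by
  set U : Finset (Fin d) := T1.1 ∪ T2.1 with hU
  have hdisj : Disjoint (U \ A) (T1.1 ∩ T2.1) := by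
    rw [Finset.disjoint_left]
    intro x hx hx'
    exact (Finset.mem_sdiff.mp hx).2 (hIA hx')
  have hUcard : U.card + (T1.1 ∩ T2.1).card = r + r := by
    have := Finset.card_union_add_card_inter T1.1 T2.1
    rw [T1.2, T2.2] at this
    exact this
  have hAU' : A ⊆ U := hAU
  have hrU : r ≤ U.card := by
    have := Finset.card_le_card hAU'
    rw [hAr] at this
    exact this
  have hT2'card : ((U \ A) ∪ (T1.1 ∩ T2.1)).card = r := by
    rw [Finset.card_union_of_disjoint hdisj, Finset.card_sdiff_of_subset hAU', hAr]
    omega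
  set T1' : SVIdx d r := ⟨A, hAr⟩ with hT1'
  set T2' : SVIdx d r := ⟨(U \ A) ∪ (T1.1 ∩ T2.1), hT2'card⟩ with hT2'
  have hch : ∀ x, chi T1 x + chi T2 x = chi T1' x + chi T2' x := by
    intro x
    have hmU : x ∈ U ↔ x ∈ T1.1 ∨ x ∈ T2.1 := by rw [hU, Finset.mem_union]
    have hm2' : x ∈ T2'.1 ↔ ((x ∈ U ∧ x ∉ A) ∨ (x ∈ T1.1 ∧ x ∈ T2.1)) := by
      rw [hT2']
      simp only [Finset.mem_union, Finset.mem_sdiff, Finset.mem_inter]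
    unfold chi
    by_cases m1 : x ∈ T1.1 <;> by_cases m2 : x ∈ T2.1 <;> by_cases mA : x ∈ A
    · rw [if_pos m1, if_pos m2, if_pos (show x ∈ T1'.1 from mA),
        if_pos (hm2'.mpr (Or.inr ⟨m1, m2⟩))]
    · exact absurd (hIA (Finset.mem_inter.mpr ⟨m1, m2⟩)) mA
    · rw [if_pos m1, if_neg m2, if_pos (show x ∈ T1'.1 from mA),
        if_neg (fun hc => by
          rcases hm2'.mp hc with ⟨_, h⟩ | ⟨_, h⟩
          exacts [h mA, m2 h])]
    · rw [if_pos m1, if_neg m2, if_neg (show x ∉ T1'.1 from mA),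
        if_pos (hm2'.mpr (Or.inl ⟨hmU.mpr (Or.inl m1), mA⟩))]
      ring
    · rw [if_neg m1, if_pos m2, if_pos (show x ∈ T1'.1 from mA),
        if_neg (fun hc => by
          rcases hm2'.mp hc with ⟨_, h⟩ | ⟨h, _⟩
          exacts [h mA, m1 h])]
      ring
    · rw [if_neg m1, if_pos m2, if_neg (show x ∉ T1'.1 from mA),
        if_pos (hm2'.mpr (Or.inl ⟨hmU.mpr (Or.inr m2), mA⟩))]
    · exact absurd (hmU.mp (hAU' mA)) (by tauto)
    · rw [if_neg m1, if_neg m2, if_neg (show x ∉ T1'.1 from mA),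
        if_neg (fun hc => by
          rcases hm2'.mp hc with ⟨h, _⟩ | ⟨h, _⟩
          exacts [(by tauto : ¬(x ∈ U)) h, m1 h])]
  have hne1' : T1' ≠ T1 := fun he => hne1 (congrArg Subtype.val he)
  have hne2' : T1' ≠ T2 := fun he => hne2 (congrArg Subtype.val he)
  refine ⟨moveV v T1 T2 T1' T2', omg_moveV h1 h2 h12 hch,
    binom_moveV_mem h1 h2 h12 hne1' hne2' hch, ?_, ?_⟩
  · rw [Finsupp.mem_support_iff, moveV_apply]
    rw [if_neg (fun hh => hne1' hh.symm), if_neg (fun hh => hne2' hh.symm), if_pos rfl]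
    omega
  · intro T hT1 hT2
    rw [moveV_apply, if_neg (fun hh => hT1 hh.symm), if_neg (fun hh => hT2 hh.symm)]
    omega

theorem round_lemma {S : SVIdx d r} {v : SVIdx d r →₀ ℕ}
    (hSb : ∀ i, chi S i ≤ omg v i)
    (hbm : ∀ jj : Fin d, omg v jj = (degg v : ℤ) → jj ∈ S.1)
    (hne : v.support.Nonempty)
    (hplt : pmax S v < r) :
    ∃ v', omg v' = omg v ∧
      binom K v v' ∈ Ideal.span (CircuitsSFSF K (toricIdeal K (SVconfig d r))) ∧
      v'.support.Nonempty ∧ pmax S v < pmax S v' := by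
  obtain ⟨T1, hT1mem, hT1max⟩ := Finset.exists_mem_eq_sup v.support hne
    (fun T => (S.1 ∩ T.1).card)
  have hp : pmax S v = (S.1 ∩ T1.1).card := hT1max
  have hSnT1 : ¬ S.1 ⊆ T1.1 := by
    intro hc
    have : S.1 ∩ T1.1 = S.1 := Finset.inter_eq_left.mpr hc
    rw [hp, this, S.2] at hplt
    omega
  obtain ⟨i, hiS, hiT1⟩ := Finset.not_subset.mp hSnT1
  have hbi : (1:ℤ) ≤ omg v i := by
    have := hSb i
    rw [chi_eq_one_iff.mpr hiS] at this
    · exact this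
  obtain ⟨T2, hT2mem, hiT2⟩ := exists_mem_of_omg_pos (by omega : (0:ℤ) < omg v i)
  by_cases hcase : ∃ T2' ∈ v.support, i ∈ T2'.1 ∧ ∃ j ∈ T1.1, j ∉ T2'.1 ∧ j ∉ S.1
  · obtain ⟨T2', hT2'm, hiT2', j, hj1, hj2, hj3⟩ := hcase
    obtain ⟨v', ho, hb, R, hR, hc⟩ := step1 (K := K) hT1mem hT2'm hiS hiT2' hiT1 hj1 hj2 hj3
    refine ⟨v', ho, hb, ⟨R, hR⟩, ?_⟩
    rw [hp]
    exact lt_of_lt_of_le hc (le_pmax hR)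
  · push_neg at hcase
    -- hcase : ∀ T2' ∈ v.support, i ∈ T2'.1 → ∀ j ∈ T1.1, j ∉ T2'.1 → j ∈ S.1
    have hT1nS : ∃ j0 ∈ T1.1, j0 ∉ S.1 := by
      by_contra hno
      push_neg at hno
      have hsub : T1.1 ⊆ S.1 := hno
      have : T1.1 = S.1 := Finset.eq_of_subset_of_card_le hsub (by rw [T1.2, S.2])
      rw [hp, this, Finset.inter_self, S.2] at hplt
      omega
    obtain ⟨j0, hj01, hj02⟩ := hT1nS
    have hT4ex : ∃ T4 ∈ v.support, ∃ j' ∈ T1.1, j' ∉ S.1 ∧ j' ∉ T4.1 := by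
      by_contra hno
      push_neg at hno
      -- every member of the support contains j0
      have hall : ∀ T ∈ v.support, j0 ∈ T.1 := fun T hT => hno T hT j0 hj01 hj02
      have homg : omg v j0 = (degg v : ℤ) := by
        rw [omg_apply, degg_eq_sum, Nat.cast_sum]
        apply Finset.sum_congr rfl
        intro T hT
        rw [chi_eq_one_iff.mpr (hall T hT), mul_one]
      exact hj02 (hbm j0 homg)
    obtain ⟨T4, hT4m, j', hj'1, hj'2, hj'3⟩ := hT4ex
    have hiT4 : i ∉ T4.1 := fun hc => hj'2 (hcase T4 hT4m hc j' hj'1 hj'3)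
    have hj'T2 : j' ∈ T2.1 := by
      by_contra hc
      exact hj'2 (hcase T2 hT2mem hiT2 j' hj'1 hc)
    have h24 : T2 ≠ T4 := fun he => hiT4 (he ▸ hiT2)
    -- build the intermediate set A2 for the pair (T2, T4)
    have hIcard : (T2.1 ∩ T4.1).card < r := by
      have hsub : T2.1 ∩ T4.1 ⊆ T2.1 := Finset.inter_subset_left
      have hne' : T2.1 ∩ T4.1 ≠ T2.1 := by
        intro he
        apply hiT4
        have : T2.1 ⊆ T4.1 := by
          intro x hx
          have : x ∈ T2.1 ∩ T4.1 := he.symm ▸ hx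
          exact (Finset.mem_inter.mp this).2
        exact this hiT2
      have := Finset.card_lt_card (Finset.ssubset_iff_subset_ne.mpr ⟨hsub, hne'⟩)
      rw [T2.2] at this
      exact this
    set UU : Finset (Fin d) := (T2.1 ∪ T4.1) \ {j'} with hUU
    set B2 : Finset (Fin d) := (T2.1 ∩ T4.1) ∪ {i} with hB2
    have hij' : i ≠ j' := fun he => hj'2 (he ▸ hiS)
    have hB2sub : B2 ⊆ UU := by
      intro x hx
      rw [hB2] at hx
      rw [hUU, Finset.mem_sdiff, Finset.mem_union, Finset.mem_singleton]
      rcases Finset.mem_union.mp hx with hx' | hx'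
      · obtain ⟨ha, hb⟩ := Finset.mem_inter.mp hx'
        exact ⟨Or.inl ha, fun hc => hj'3 (hc ▸ hb)⟩
      · rw [Finset.mem_singleton.mp hx']
        exact ⟨Or.inl hiT2, hij'⟩
    have hB2card : B2.card ≤ r := by
      have h1 := Finset.card_union_le (T2.1 ∩ T4.1) ({i} : Finset (Fin d))
      rw [Finset.card_singleton] at h1
      rw [hB2]
      omega
    have hU24card : (T2.1 ∪ T4.1).card + (T2.1 ∩ T4.1).card = r + r := by
      have := Finset.card_union_add_card_inter T2.1 T4.1
      rw [T2.2, T4.2] at this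
      exact this
    have hUUcard : UU.card + 1 = (T2.1 ∪ T4.1).card := by
      rw [hUU, Finset.card_sdiff_of_subset (Finset.singleton_subset_iff.mpr
        (Finset.mem_union_left _ hj'T2)), Finset.card_singleton]
      have : 1 ≤ (T2.1 ∪ T4.1).card :=
        Finset.card_pos.mpr ⟨j', Finset.mem_union_left _ hj'T2⟩
      omega
    obtain ⟨A2, hBA2, hA2UU, hA2card⟩ := Finset.exists_subsuperset_card_eq (n := r - B2.card + B2.card)
      hB2sub (by omega) (by omega)
    have hA2r : A2.card = r := by omega
    have hA2U : A2 ⊆ T2.1 ∪ T4.1 := fun x hx => (Finset.mem_sdiff.mp (hA2UU hx)).1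
    have hj'A2 : j' ∉ A2 := fun hc => (Finset.mem_sdiff.mp (hA2UU hc)).2 (Finset.mem_singleton_self j')
    have hiA2 : i ∈ A2 := hBA2 (Finset.mem_union_right _ (Finset.mem_singleton_self i))
    have hIA2 : T2.1 ∩ T4.1 ⊆ A2 := fun x hx => hBA2 (Finset.mem_union_left _ hx)
    have hA2ne2 : A2 ≠ T2.1 := fun he => hj'A2 (he ▸ hj'T2)
    have hA2ne4 : A2 ≠ T4.1 := fun he => hiT4 (he ▸ hiA2)
    obtain ⟨v1, ho1, hb1, hA2supp, hother⟩ :=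
      pair_move (K := K) hT2mem hT4m h24 hIA2 hA2U hA2r hA2ne2 hA2ne4
    -- now apply step1 in v1 with the pair (T1, ⟨A2⟩)
    have hT1T2 : T1 ≠ T2 := fun he => hiT1 (he ▸ hiT2)
    have hT1T4 : T1 ≠ T4 := fun he => hj'3 (he ▸ hj'1)
    have hT1v1 : T1 ∈ v1.support := by
      rw [Finsupp.mem_support_iff]
      have := hother T1 hT1T2 hT1T4
      have hv1 : v T1 ≠ 0 := Finsupp.mem_support_iff.mp hT1mem
      omega
    obtain ⟨v2, ho2, hb2, R, hR, hc⟩ := step1 (K := K) (S := S) hT1v1 hA2supp hiS hiA2 hiT1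
      hj'1 hj'A2 hj'2
    refine ⟨v2, by rw [ho2, ho1], ?_, ⟨R, hR⟩, ?_⟩
    · rw [← binom_add_binom (v := v1)]
      exact Ideal.add_mem _ hb1 hb2
    · rw [hp]
      exact lt_of_lt_of_le hc (le_pmax hR)

end


section
variable {d r : ℕ} {K : Type*} [Field K]

theorem reach_done {S : SVIdx d r} {v : SVIdx d r →₀ ℕ}
    (hne : v.support.Nonempty) (hge : r ≤ pmax S v) : S ∈ v.support := by
  obtain ⟨T, hTmem, hTmax⟩ := Finset.exists_mem_eq_sup v.support hne
    (fun T => (S.1 ∩ T.1).card)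
  have hST : (S.1 ∩ T.1).card = r := by
    have h1 : (S.1 ∩ T.1).card ≤ r := by
      have := Finset.card_le_card (Finset.inter_subset_left : S.1 ∩ T.1 ⊆ S.1)
      rw [S.2] at this
      exact this
    have h2 : r ≤ (S.1 ∩ T.1).card := by
      rw [pmax, hTmax] at hge
      exact hge
    omega
  have : S.1 ∩ T.1 = S.1 :=
    Finset.eq_of_subset_of_card_le Finset.inter_subset_left (by rw [S.2, hST])
  have hsub : S.1 ⊆ T.1 := by
    intro x hx
    have : x ∈ S.1 ∩ T.1 := this.symm ▸ hx
    exact (Finset.mem_inter.mp this).2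
  have : S.1 = T.1 := Finset.eq_of_subset_of_card_le hsub (by rw [S.2, T.2])
  rw [show S = T from Subtype.ext this]
  exact hTmem

theorem reach_S (hr : 0 < r) {S : SVIdx d r} : ∀ (k : ℕ) (v : SVIdx d r →₀ ℕ),
    (∀ i, chi S i ≤ omg v i) → (∀ jj : Fin d, omg v jj = (degg v : ℤ) → jj ∈ S.1) →
    v.support.Nonempty → r ≤ pmax S v + k →
    ∃ v', omg v' = omg v ∧
      binom K v v' ∈ Ideal.span (CircuitsSFSF K (toricIdeal K (SVconfig d r))) ∧
      S ∈ v'.support := by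
  intro k
  induction k with
  | zero =>
    intro v _ _ hne hk
    exact ⟨v, rfl, by rw [binom_self]; exact Ideal.zero_mem _,
      reach_done hne (by omega)⟩
  | succ k ih =>
    intro v hSb hbm hne hk
    by_cases hp : r ≤ pmax S v
    · exact ⟨v, rfl, by rw [binom_self]; exact Ideal.zero_mem _, reach_done hne hp⟩
    · obtain ⟨v1, ho1, hb1, hne1, hlt⟩ := round_lemma (K := K) hSb hbm hne (by omega)
      have hdeq : degg v1 = degg v := by
        have h1 := sum_omg v1
        have h2 := sum_omg v
        rw [ho1] at h1
        rw [h2] at h1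
        have : (r:ℤ) ≠ 0 := by exact_mod_cast Nat.pos_iff_ne_zero.mp hr
        have := mul_left_cancel₀ this h1
        exact_mod_cast this.symm
      obtain ⟨v2, ho2, hb2, hS2⟩ := ih v1 (fun i => ho1 ▸ hSb i)
        (fun jj hj => hbm jj (by rw [← ho1, hj, hdeq])) hne1 (by omega)
      refine ⟨v2, by rw [ho2, ho1], ?_, hS2⟩
      rw [← binom_add_binom (v := v1)]
      exact Ideal.add_mem _ hb1 hb2

theorem binom_mem_span (hr : 0 < r) : ∀ (n : ℕ) (u v : SVIdx d r →₀ ℕ),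
    degg u ≤ n → omg u = omg v →
    binom K u v ∈ Ideal.span (CircuitsSFSF K (toricIdeal K (SVconfig d r))) := by
  intro n
  induction n with
  | zero =>
    intro u v hdeg homg
    have hu0 : u = 0 := (degg_eq_zero_iff u).mp (by omega)
    have hv0 : v = 0 := by
      rw [← degg_eq_zero_iff]
      have h1 := sum_omg v
      rw [← homg, hu0, omg_zero] at h1
      simp only [Pi.zero_apply, Finset.sum_const_zero] at h1
      have : (r:ℤ) ≠ 0 := by exact_mod_cast Nat.pos_iff_ne_zero.mp hr
      have := (mul_eq_zero.mp h1.symm).resolve_left this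
      exact_mod_cast this
    rw [hu0, hv0, binom_self]
    exact Ideal.zero_mem _
  | succ n ih =>
    intro u v hdeg homg
    by_cases huv : u = v
    · rw [huv, binom_self]; exact Ideal.zero_mem _
    by_cases hd0 : degg u = 0
    · -- degenerate, handled as in base case
      have hu0 : u = 0 := (degg_eq_zero_iff u).mp hd0
      have hv0 : v = 0 := by
        rw [← degg_eq_zero_iff]
        have h1 := sum_omg v
        rw [← homg, hu0, omg_zero] at h1
        simp only [Pi.zero_apply, Finset.sum_const_zero] at h1
        have : (r:ℤ) ≠ 0 := by exact_mod_cast Nat.pos_iff_ne_zero.mp hr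
        have := (mul_eq_zero.mp h1.symm).resolve_left this
        exact_mod_cast this
      exact absurd (hu0.trans hv0.symm) huv
    · have hune : u ≠ 0 := fun hc => hd0 (by rw [hc]; rfl)
      obtain ⟨S, hS⟩ := Finsupp.support_nonempty_iff.mpr hune
      have hdeq : degg v = degg u := by
        have h1 := sum_omg v
        have h2 := sum_omg u
        rw [← homg, h2] at h1
        have : (r:ℤ) ≠ 0 := by exact_mod_cast Nat.pos_iff_ne_zero.mp hr
        have := mul_left_cancel₀ this h1
        exact_mod_cast this.symm
      have hvne : v.support.Nonempty := by
        rw [Finsupp.support_nonempty_iff]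
        intro hc
        rw [hc] at hdeq
        exact hd0 (by rw [← hdeq]; rfl)
      -- reach a representation containing S
      obtain ⟨v', ho', hb', hS'⟩ := reach_S (K := K) hr r v
        (fun i => homg ▸ chi_le_omg hS i)
        (fun jj hj => mem_all_of_omg_eq_degg (u := u) (by rw [homg, hj, hdeq]) hS)
        hvne (by omega)
      -- split off S from both u and v'
      set u1 := u - Finsupp.single S 1 with hu1
      set v1 := v' - Finsupp.single S 1 with hv1
      have hdu : u = Finsupp.single S 1 + u1 := decomp_one hS
      have hdv : v' = Finsupp.single S 1 + v1 := decomp_one hS'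
      have homg1 : omg u1 = omg v1 := by
        have e1 : omg u = omg (Finsupp.single S 1) + omg u1 := by rw [hdu, omg_add]
        have e2 : omg v' = omg (Finsupp.single S 1) + omg v1 := by rw [hdv, omg_add]
        have e3 : omg u = omg v' := by rw [homg, ho']
        have e4 : omg (Finsupp.single S 1) + omg u1
            = omg (Finsupp.single S 1) + omg v1 := by
          rw [← e1, ← e2]; exact e3
        funext x
        have := congrFun e4 x
        simp only [Pi.add_apply] at this
        omega
      have hdeg1 : degg u1 ≤ n := by
        have : degg u = 1 + degg u1 := by rw [hdu, degg_add, degg_single]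
        omega
      have hkey : binom K u v' = MvPolynomial.monomial (Finsupp.single S 1) 1
          * binom K u1 v1 := by
        rw [binom, binom, mul_sub, MvPolynomial.monomial_mul, MvPolynomial.monomial_mul,
          mul_one, ← hdu, ← hdv]
      have hb1 : binom K u v' ∈ Ideal.span (CircuitsSFSF K (toricIdeal K (SVconfig d r))) := by
        rw [hkey]
        exact Ideal.mul_mem_left _ _ (ih u1 v1 hdeg1 homg1)
      rw [← binom_add_binom (v := v')]
      refine Ideal.add_mem _ hb1 ?_
      have : binom K v' v = -binom K v v' := by unfold binom; ring
      rw [this]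
      exact Submodule.neg_mem _ hb'

end

end AUX

/-- The toric ideal of the squarefree Veronese configuration is generated by the
circuits both of whose monomials are squarefree. -/
theorem squarefree_veronese_generated_by_sfsf_circuits (d r : ℕ) (h2 : 2 ≤ r)
    (hrd : r ≤ d) (K : Type*) [Field K] :
    toricIdeal K (SVconfig d r) =
      Ideal.span (CircuitsSFSF K (toricIdeal K (SVconfig d r))) := by
  apply le_antisymm
  · intro f hf
    have hspan : (BinomSet K d r : Set (MvPolynomial (SVIdx d r) K))
        ⊆ (Ideal.span (CircuitsSFSF K (toricIdeal K (SVconfig d r))) : Set _) := by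
      rintro g ⟨u, v, huv, homg, rfl⟩
      exact binom_mem_span (by omega) (degg u) u v le_rfl homg
    have h1 := toricIdeal_le_span_binoms f hf
    exact (Ideal.span_le.mpr hspan) h1
  · apply Ideal.span_le.mpr
    rintro f ⟨⟨_, hmem, _, _⟩, _⟩
    exact hmem
end

section
/- Let d ≥ 2 and r ≥ 3 be integers and let A = V_d^{(r)} be the r-th Veronese configuration whose columns are all nonnegative integer vectors in ℤ^d with coordinate sum r. Then the toric ideal I_A is NOT generated by its set C_A of circuits; in particular I_A is not generated by C_A^sf. -/
open MvPolynomial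

/-- The `r`-th Veronese configuration: columns are the nonnegative integer vectors in
`ℤ^d` with coordinate sum `r`. -/
def Vconfig (d r : ℕ) : Matrix (Fin d) {α : Fin d → ℕ // ∑ i, α i = r} ℤ :=
  fun i α => (α.1 i : ℤ)

namespace VeroneseCircuits

open MvPolynomial

variable {d r : ℕ} {K : Type*} [Field K]

abbrev Idx (d r : ℕ) := {α : Fin d → ℕ // ∑ i, α i = r}

/-! ### degree of an exponent vector -/

def deg {σ : Type*} (s : σ →₀ ℕ) : ℕ := s.sum fun _ n => n

section Deg
variable {σ : Type*}

lemma deg_add (s t : σ →₀ ℕ) : deg (s + t) = deg s + deg t := by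
  classical
  unfold deg
  exact Finsupp.sum_add_index' (fun _ => rfl) (fun _ _ _ => rfl)

lemma deg_single (j : σ) (n : ℕ) : deg (Finsupp.single j n) = n := by
  classical
  unfold deg
  exact Finsupp.sum_single_index rfl

lemma deg_eq_zero {s : σ →₀ ℕ} (h : deg s = 0) : s = 0 := by
  classical
  unfold deg Finsupp.sum at h
  ext j
  by_cases hj : j ∈ s.support
  · exact (Finset.sum_eq_zero_iff.mp h j hj)
  · simpa using Finsupp.notMem_support_iff.mp hj

lemma deg_succ {s : σ →₀ ℕ} {n : ℕ} (h : deg s = n + 1) :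
    ∃ (j : σ) (t : σ →₀ ℕ), s = Finsupp.single j 1 + t ∧ deg t = n := by
  classical
  have hs : s ≠ 0 := by
    intro h0; rw [h0] at h; simp [deg] at h
  obtain ⟨j, hj⟩ := Finsupp.support_nonempty_iff.mpr hs
  have hj1 : Finsupp.single j 1 ≤ s := by
    rw [Finsupp.single_le_iff]
    exact Nat.one_le_iff_ne_zero.mpr (Finsupp.mem_support_iff.mp hj)
  refine ⟨j, s - Finsupp.single j 1, ?_, ?_⟩
  · rw [add_tsub_cancel_of_le hj1]
  · have := deg_add (Finsupp.single j 1) (s - Finsupp.single j 1)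
    rw [add_tsub_cancel_of_le hj1, h, deg_single] at this
    omega

lemma deg_eq_one {s : σ →₀ ℕ} (h : deg s = 1) : ∃ j, s = Finsupp.single j 1 := by
  obtain ⟨j, t, hst, ht⟩ := deg_succ h
  exact ⟨j, by rw [hst, deg_eq_zero ht, add_zero]⟩

lemma deg_eq_two {s : σ →₀ ℕ} (h : deg s = 2) :
    ∃ i j, s = Finsupp.single i 1 + Finsupp.single j 1 := by
  obtain ⟨i, t, hst, ht⟩ := deg_succ h
  obtain ⟨j, htj⟩ := deg_eq_one ht
  exact ⟨i, j, by rw [hst, htj]⟩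

lemma le_deg_eq {s u : σ →₀ ℕ} (h : s ≤ u) (hd : deg s = deg u) : s = u := by
  have h1 : s + (u - s) = u := add_tsub_cancel_of_le h
  have h2 := deg_add s (u - s)
  rw [h1, ← hd] at h2
  have h3 : deg (u - s) = 0 := by omega
  rw [← h1, deg_eq_zero h3, add_zero]

lemma deg_mono {s u : σ →₀ ℕ} (h : s ≤ u) : deg s ≤ deg u := by
  have h1 : s + (u - s) = u := add_tsub_cancel_of_le h
  have h2 := deg_add s (u - s)
  rw [h1] at h2; omega

end Deg

/-! ### the special columns -/

def fin0 (hd : 2 ≤ d) : Fin d := ⟨0, by omega⟩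
def fin1 (hd : 2 ≤ d) : Fin d := ⟨1, by omega⟩

lemma fin0_ne_fin1 (hd : 2 ≤ d) : fin0 hd ≠ fin1 hd := by
  simp [fin0, fin1, Fin.ext_iff]

def pcol (hd : 2 ≤ d) (k : ℕ) (hk : k ≤ r) : Idx d r :=
  ⟨fun i => (if i = fin0 hd then r - k else 0) + (if i = fin1 hd then k else 0), by
    rw [Finset.sum_add_distrib]
    simp [Finset.sum_ite_eq', fin0_ne_fin1 hd]
    omega⟩

lemma pcol_apply0 (hd : 2 ≤ d) {k : ℕ} (hk : k ≤ r) : (pcol hd k hk).1 (fin0 hd) = r - k := by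
  simp [pcol, fin0_ne_fin1 hd]

lemma pcol_apply1 (hd : 2 ≤ d) {k : ℕ} (hk : k ≤ r) : (pcol hd k hk).1 (fin1 hd) = k := by
  simp [pcol, (fin0_ne_fin1 hd).symm]

lemma pcol_apply_other (hd : 2 ≤ d) {k : ℕ} (hk : k ≤ r) {i : Fin d}
    (h0 : i ≠ fin0 hd) (h1 : i ≠ fin1 hd) : (pcol hd k hk).1 i = 0 := by
  simp [pcol, h0, h1]

lemma pcol_inj (hd : 2 ≤ d) {k l : ℕ} (hk : k ≤ r) (hl : l ≤ r) (h : k ≠ l) :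
    pcol hd k hk ≠ pcol hd l hl := by
  intro he
  have := congrFun (congrArg Subtype.val he) (fin1 hd)
  rw [pcol_apply1, pcol_apply1] at this
  exact h this

lemma col_classify (hd : 2 ≤ d) (c : Idx d r) {k : ℕ} (hk : k ≤ r)
    (h1 : c.1 (fin1 hd) = k) (h0 : ∀ i, i ≠ fin0 hd → i ≠ fin1 hd → c.1 i = 0) :
    c = pcol hd k hk := by
  have hsum : ∑ i, c.1 i = r := c.2
  have hpt : ∀ i : Fin d, c.1 i =
      (if i = fin0 hd then c.1 (fin0 hd) else 0) + (if i = fin1 hd then k else 0) := by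
    intro i
    by_cases hi0 : i = fin0 hd
    · subst hi0; simp [fin0_ne_fin1 hd]
    · by_cases hi1 : i = fin1 hd
      · subst hi1; simp [(fin0_ne_fin1 hd).symm, h1]
      · simp [hi0, hi1, h0 i hi0 hi1]
  have hsum2 : c.1 (fin0 hd) + k = r := by
    rw [Finset.sum_congr rfl (fun i _ => hpt i), Finset.sum_add_distrib] at hsum
    simpa [Finset.sum_ite_eq'] using hsum
  apply Subtype.ext
  funext i
  rw [hpt i]
  by_cases hi0 : i = fin0 hd
  · subst hi0; simp [fin0_ne_fin1 hd, pcol_apply0 hd hk]; omega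
  · by_cases hi1 : i = fin1 hd
    · subst hi1; simp [(fin0_ne_fin1 hd).symm, hi0, pcol_apply1 hd hk]
    · simp [hi0, hi1, pcol_apply_other hd hk hi0 hi1]

def P0 (hd : 2 ≤ d) : Idx d r := pcol hd 0 (Nat.zero_le r)
def P1 (hd : 2 ≤ d) (hr : 3 ≤ r) : Idx d r := pcol hd 1 (by omega)
def P2 (hd : 2 ≤ d) (hr : 3 ≤ r) : Idx d r := pcol hd 2 (by omega)
def P3 (hd : 2 ≤ d) (hr : 3 ≤ r) : Idx d r := pcol hd 3 hr

/-! ### weights -/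

def Wt (s : Idx d r →₀ ℕ) : Fin d → ℤ :=
  s.sum fun j n => n • fun i => (j.1 i : ℤ)

lemma toricMap_monomial (s : Idx d r →₀ ℕ) :
    toricMap K (Vconfig d r) (monomial s 1) = AddMonoidAlgebra.single (Wt s) 1 := by
  rw [toricMap, aeval_monomial, map_one, one_mul, Finsupp.prod]
  simp only [AddMonoidAlgebra.single_pow, one_pow]
  rw [AddMonoidAlgebra.prod_single]
  simp [Wt, Finsupp.sum, Vconfig]

lemma binom_mem_iff {s t : Idx d r →₀ ℕ} :
    binom K s t ∈ toricIdeal K (Vconfig d r) ↔ Wt s = Wt t := by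
  classical
  rw [toricIdeal, RingHom.mem_ker]
  change toricMap K (Vconfig d r) (binom K s t) = 0 ↔ _
  rw [binom, map_sub, toricMap_monomial, toricMap_monomial, sub_eq_zero]
  constructor
  · intro h
    rcases AddMonoidAlgebra.single_inj.mp h with ⟨h1, _⟩ | ⟨h1, _⟩
    · exact h1
    · exact absurd h1 one_ne_zero
  · intro h; rw [h]

lemma Wt_single (j : Idx d r) (n : ℕ) :
    Wt (Finsupp.single j n) = fun i => (n : ℤ) * j.1 i := by
  rw [Wt, Finsupp.sum_single_index (by simp)]
  funext i
  simp

lemma Wt_add (s t : Idx d r →₀ ℕ) : Wt (s + t) = Wt s + Wt t := by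
  rw [Wt, Wt, Wt]
  exact Finsupp.sum_add_index' (fun _ => by simp) (fun j m n => by
    funext i; simp [add_smul, add_mul])

lemma sum_Wt (s : Idx d r →₀ ℕ) : ∑ m, Wt s m = (r : ℤ) * deg s := by
  classical
  have h1 : ∀ m, Wt s m = ∑ j ∈ s.support, (s j : ℤ) * j.1 m := by
    intro m
    rw [Wt, Finsupp.sum, Finset.sum_apply]
    simp
  simp_rw [h1]
  rw [Finset.sum_comm]
  have h2 : ∀ j ∈ s.support, ∑ m, (s j : ℤ) * (j.1 m : ℤ) = (s j : ℤ) * r := by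
    intro j _
    rw [← Finset.mul_sum]
    congr 1
    rw [← Nat.cast_sum]
    exact_mod_cast congrArg (Nat.cast : ℕ → ℤ) j.2
  rw [Finset.sum_congr rfl h2, deg, Finsupp.sum]
  push_cast
  rw [Finset.mul_sum]
  exact Finset.sum_congr rfl fun j _ => mul_comm _ _

lemma deg_eq_of_mem (hr : 3 ≤ r) {s t : Idx d r →₀ ℕ}
    (h : binom K s t ∈ toricIdeal K (Vconfig d r)) : deg s = deg t := by
  have hw : Wt s = Wt t := binom_mem_iff.mp h
  have h1 : (r : ℤ) * deg s = (r : ℤ) * deg t := by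
    rw [← sum_Wt, ← sum_Wt, hw]
  have hr0 : (r : ℤ) ≠ 0 := by exact_mod_cast (by omega : r ≠ 0)
  exact_mod_cast mul_left_cancel₀ hr0 h1

/-! ### coefficients, support, vars of binomials -/

lemma coeff_binom (u v w : Idx d r →₀ ℕ) :
    coeff w (binom K u v) = (if u = w then 1 else 0) - (if v = w then 1 else 0) := by
  simp [binom, coeff_monomial]

lemma support_binom {u v : Idx d r →₀ ℕ} (h : u ≠ v) :
    (binom K u v).support = {u, v} := by
  classical
  ext w
  rw [MvPolynomial.mem_support_iff, coeff_binom]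
  by_cases hu : u = w <;> by_cases hv : v = w
  · exact absurd (hu.trans hv.symm) h
  · simp [hu, hv]
  · simp [hu, hv]
  · simp [hu, hv, Ne.symm hu, Ne.symm hv]

lemma vars_binom {u v : Idx d r →₀ ℕ} (h : u ≠ v) :
    (binom K u v).vars = u.support ∪ v.support := by
  classical
  ext i
  rw [MvPolynomial.mem_vars]
  simp [support_binom h]

end VeroneseCircuits
namespace VeroneseCircuits

open MvPolynomial

variable {d r : ℕ} {K : Type*} [Field K]

/-- the exponent `e_{p0} + e_{p3}` -/
noncomputable def uexp (hd : 2 ≤ d) (hr : 3 ≤ r) : Idx d r →₀ ℕ :=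
  Finsupp.single (P0 hd) 1 + Finsupp.single (P3 hd hr) 1

/-- the exponent `e_{p1} + e_{p2}` -/
noncomputable def vexp (hd : 2 ≤ d) (hr : 3 ≤ r) : Idx d r →₀ ℕ :=
  Finsupp.single (P1 hd hr) 1 + Finsupp.single (P2 hd hr) 1

lemma P0_ne_P1 (hd : 2 ≤ d) (hr : 3 ≤ r) : P0 (r := r) hd ≠ P1 hd hr := pcol_inj hd _ _ (by omega)
lemma P0_ne_P2 (hd : 2 ≤ d) (hr : 3 ≤ r) : P0 (r := r) hd ≠ P2 hd hr := pcol_inj hd _ _ (by omega)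
lemma P0_ne_P3 (hd : 2 ≤ d) (hr : 3 ≤ r) : P0 (r := r) hd ≠ P3 hd hr := pcol_inj hd _ _ (by omega)
lemma P1_ne_P2 (hd : 2 ≤ d) (hr : 3 ≤ r) : P1 (r := r) hd hr ≠ P2 hd hr := pcol_inj hd _ _ (by omega)
lemma P1_ne_P3 (hd : 2 ≤ d) (hr : 3 ≤ r) : P1 (r := r) hd hr ≠ P3 hd hr := pcol_inj hd _ _ (by omega)
lemma P2_ne_P3 (hd : 2 ≤ d) (hr : 3 ≤ r) : P2 (r := r) hd hr ≠ P3 hd hr := pcol_inj hd _ _ (by omega)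

lemma uexp_ne_vexp (hd : 2 ≤ d) (hr : 3 ≤ r) : uexp hd hr ≠ vexp hd hr := by
  intro h
  have := congrFun (congrArg (DFunLike.coe) h) (P0 hd)
  rw [uexp, vexp] at this
  simp [Finsupp.single_apply, P0_ne_P3 hd hr, P0_ne_P1 hd hr, P0_ne_P2 hd hr,
    (P0_ne_P1 hd hr).symm, (P0_ne_P2 hd hr).symm] at this

lemma deg_uexp (hd : 2 ≤ d) (hr : 3 ≤ r) : deg (uexp hd hr) = 2 := by
  rw [uexp, deg_add, deg_single, deg_single]

/-- key numeric identity `p0 + p3 = p1 + p2` coordinatewise. -/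
lemma key_nat (hd : 2 ≤ d) (hr : 3 ≤ r) (i : Fin d) :
    (P0 (r := r) hd).1 i + (P3 hd hr).1 i = (P1 hd hr).1 i + (P2 hd hr).1 i := by
  by_cases h0 : i = fin0 hd
  · subst h0
    rw [P0, P1, P2, P3, pcol_apply0, pcol_apply0, pcol_apply0, pcol_apply0]
    omega
  · by_cases h1 : i = fin1 hd
    · subst h1
      rw [P0, P1, P2, P3, pcol_apply1, pcol_apply1, pcol_apply1, pcol_apply1]
    · rw [P0, P1, P2, P3, pcol_apply_other hd _ h0 h1, pcol_apply_other hd _ h0 h1,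
        pcol_apply_other hd _ h0 h1, pcol_apply_other hd _ h0 h1]

/-- key numeric identity `3·p1 = 2·p0 + p3` coordinatewise. -/
lemma key_nat' (hd : 2 ≤ d) (hr : 3 ≤ r) (i : Fin d) :
    3 * (P1 (r := r) hd hr).1 i = 2 * (P0 (r := r) hd).1 i + (P3 hd hr).1 i := by
  by_cases h0 : i = fin0 hd
  · subst h0
    rw [P0, P1, P3, pcol_apply0, pcol_apply0, pcol_apply0]
    omega
  · by_cases h1 : i = fin1 hd
    · subst h1
      rw [P0, P1, P3, pcol_apply1, pcol_apply1, pcol_apply1]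
    · rw [P0, P1, P3, pcol_apply_other hd _ h0 h1, pcol_apply_other hd _ h0 h1,
        pcol_apply_other hd _ h0 h1]

lemma Wt_uexp (hd : 2 ≤ d) (hr : 3 ≤ r) (i : Fin d) :
    Wt (uexp hd hr : Idx d r →₀ ℕ) i = ((P0 (r := r) hd).1 i : ℤ) + ((P3 hd hr).1 i : ℤ) := by
  rw [uexp, Wt_add, Pi.add_apply, Wt_single, Wt_single]
  push_cast
  ring

lemma Wt_vexp (hd : 2 ≤ d) (hr : 3 ≤ r) (i : Fin d) :
    Wt (vexp hd hr : Idx d r →₀ ℕ) i = ((P1 hd hr).1 i : ℤ) + ((P2 hd hr).1 i : ℤ) := by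
  rw [vexp, Wt_add, Pi.add_apply, Wt_single, Wt_single]
  push_cast
  ring

/-- the binomial `f = x_{p0} x_{p3} - x_{p1} x_{p2}` lies in the toric ideal. -/
lemma f_mem (hd : 2 ≤ d) (hr : 3 ≤ r) :
    binom K (uexp hd hr) (vexp hd hr) ∈ toricIdeal K (Vconfig d r) := by
  rw [binom_mem_iff]
  funext i
  rw [Wt_uexp, Wt_vexp]
  exact_mod_cast congrArg (Nat.cast : ℕ → ℤ) (key_nat hd hr i)

/-- classification of pairs of columns summing to `p0 + p3`. -/
lemma pair_classify (hd : 2 ≤ d) (hr : 3 ≤ r) (a b : Idx d r)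
    (h : ∀ i, a.1 i + b.1 i = (P0 (r := r) hd).1 i + (P3 hd hr).1 i) :
    (a = P0 hd ∧ b = P3 hd hr) ∨ (a = P3 hd hr ∧ b = P0 hd) ∨
    (a = P1 hd hr ∧ b = P2 hd hr) ∨ (a = P2 hd hr ∧ b = P1 hd hr) := by
  have h1 := h (fin1 hd)
  rw [P0, P3, pcol_apply1, pcol_apply1] at h1
  have hother : ∀ i, i ≠ fin0 hd → i ≠ fin1 hd → a.1 i = 0 ∧ b.1 i = 0 := by
    intro i hi0 hi1
    have := h i
    rw [P0, P3, pcol_apply_other hd _ hi0 hi1, pcol_apply_other hd _ hi0 hi1] at this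
    omega
  have ha : ∀ (k : ℕ) (hk : k ≤ r), a.1 (fin1 hd) = k → a = pcol hd k hk :=
    fun k hk he => col_classify hd a hk he (fun i h0 h1 => (hother i h0 h1).1)
  have hb : ∀ (k : ℕ) (hk : k ≤ r), b.1 (fin1 hd) = k → b = pcol hd k hk :=
    fun k hk he => col_classify hd b hk he (fun i h0 h1 => (hother i h0 h1).2)
  have hc : a.1 (fin1 hd) = 0 ∨ a.1 (fin1 hd) = 1 ∨ a.1 (fin1 hd) = 2 ∨ a.1 (fin1 hd) = 3 := by
    omega
  rcases hc with hc | hc | hc | hc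
  · exact Or.inl ⟨ha 0 (Nat.zero_le r) hc, hb 3 hr (by omega)⟩
  · exact Or.inr (Or.inr (Or.inl ⟨ha 1 (by omega) hc, hb 2 (by omega) (by omega)⟩))
  · exact Or.inr (Or.inr (Or.inr ⟨ha 2 (by omega) hc, hb 1 (by omega) (by omega)⟩))
  · exact Or.inr (Or.inl ⟨ha 3 hr hc, hb 0 (Nat.zero_le r) (by omega)⟩)

end VeroneseCircuits
namespace VeroneseCircuits

open MvPolynomial

variable {d r : ℕ} {K : Type*} [Field K]

lemma support_pair {x y : Idx d r} (hxy : x ≠ y) {m n : ℕ} (hm : m ≠ 0) (hn : n ≠ 0) :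
    (Finsupp.single x m + Finsupp.single y n).support = {x, y} := by
  classical
  rw [Finsupp.support_add_eq, Finsupp.support_single_ne_zero _ hm,
    Finsupp.support_single_ne_zero _ hn]
  · rfl
  · rw [Finsupp.support_single_ne_zero _ hm, Finsupp.support_single_ne_zero _ hn]
    simp only [Finset.disjoint_singleton_right, Finset.mem_singleton]
    exact Ne.symm hxy

/-- the contradiction with minimality, when the circuit is `x_{p0}x_{p3} - x_{p1}x_{p2}`. -/
lemma min_contra (hd : 2 ≤ d) (hr : 3 ≤ r) (t : Idx d r →₀ ℕ)
    (hts : uexp hd hr ≠ t) (htsupp : t.support = {P1 hd hr, P2 hd hr})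
    (hmin : ∀ g ∈ toricIdeal K (Vconfig d r), IsBinomial g →
      ¬(g.vars ⊂ (binom K (uexp hd hr) t).vars)) : False := by
  classical
  have hq : (Finsupp.single (P1 hd hr) 3 : Idx d r →₀ ℕ) ≠
      Finsupp.single (P0 hd) 2 + Finsupp.single (P3 hd hr) 1 := by
    intro h
    have := congrFun (congrArg DFunLike.coe h) (P1 hd hr)
    simp [Finsupp.single_apply, P0_ne_P1 hd hr, (P1_ne_P3 hd hr).symm] at this
  have hqmem : binom K (Finsupp.single (P1 hd hr) 3)
      (Finsupp.single (P0 hd) 2 + Finsupp.single (P3 hd hr) 1) ∈ toricIdeal K (Vconfig d r) := by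
    rw [binom_mem_iff]
    funext i
    have h2 := key_nat' hd hr i
    simp only [Wt_add, Pi.add_apply, Wt_single]
    push_cast
    omega
  refine hmin _ hqmem ⟨_, _, hq, rfl⟩ ?_
  rw [vars_binom hq, vars_binom hts, Finsupp.support_single_ne_zero _ (by norm_num : (3:ℕ) ≠ 0),
    support_pair (P0_ne_P3 hd hr) (by norm_num) (by norm_num),
    show (uexp hd hr).support = {P0 hd, P3 hd hr} from
      support_pair (P0_ne_P3 hd hr) one_ne_zero one_ne_zero, htsupp]
  rw [Finset.ssubset_def]
  constructor
  · intro x hx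
    simp only [Finset.mem_union, Finset.mem_singleton, Finset.mem_insert] at hx ⊢
    tauto
  · intro hsub
    have h2 := hsub (show P2 hd hr ∈ _ by simp)
    simp only [Finset.mem_union, Finset.mem_singleton, Finset.mem_insert] at h2
    rcases h2 with h2 | h2 | h2
    · exact P1_ne_P2 hd hr h2.symm
    · exact P0_ne_P2 hd hr h2.symm
    · exact P2_ne_P3 hd hr h2

/-- no monomial of a support-minimal binomial in the toric ideal divides `x_{p0}x_{p3}`. -/
lemma no_divisor (hd : 2 ≤ d) (hr : 3 ≤ r) {s t : Idx d r →₀ ℕ} (hst : s ≠ t)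
    (hmem : binom K s t ∈ toricIdeal K (Vconfig d r))
    (hmin : ∀ g ∈ toricIdeal K (Vconfig d r), IsBinomial g →
      ¬(g.vars ⊂ (binom K s t).vars))
    (hle : s ≤ uexp hd hr) : False := by
  classical
  have hdeg : deg s = deg t := deg_eq_of_mem hr hmem
  have hds : deg s ≤ 2 := by
    have := deg_mono hle
    rwa [deg_uexp hd hr] at this
  have hcase : deg s = 0 ∨ deg s = 1 ∨ deg s = 2 := by omega
  rcases hcase with h | h | h
  · exact hst ((deg_eq_zero h).trans (deg_eq_zero (by omega : deg t = 0)).symm)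
  · obtain ⟨a, hsa⟩ := deg_eq_one h
    obtain ⟨b, htb⟩ := deg_eq_one (by omega : deg t = 1)
    subst hsa; subst htb
    have hw := binom_mem_iff.mp hmem
    rw [Wt_single, Wt_single] at hw
    have hab : a = b := by
      apply Subtype.ext
      funext i
      have := congrFun hw i
      simpa using this
    exact hst (by rw [hab])
  · have hsu : s = uexp hd hr := le_deg_eq hle (by rw [h, deg_uexp hd hr])
    subst hsu
    obtain ⟨a, b, htab⟩ := deg_eq_two (by omega : deg t = 2)
    subst htab
    have hw := binom_mem_iff.mp hmem
    have hnat : ∀ i, a.1 i + b.1 i = (P0 (r := r) hd).1 i + (P3 hd hr).1 i := by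
      intro i
      have h1 := congrFun hw i
      rw [Wt_uexp hd hr, Wt_add, Pi.add_apply, Wt_single, Wt_single] at h1
      have h1' : ((P0 (r := r) hd).1 i : ℤ) + ((P3 hd hr).1 i : ℤ)
          = (a.1 i : ℤ) + (b.1 i : ℤ) := by simpa using h1
      exact_mod_cast h1'.symm
    rcases pair_classify hd hr a b hnat with ⟨ha, hb⟩ | ⟨ha, hb⟩ | ⟨ha, hb⟩ | ⟨ha, hb⟩
    · subst ha; subst hb; exact hst rfl
    · subst ha; subst hb
      exact hst (by rw [uexp, add_comm])
    · subst ha; subst hb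
      exact min_contra hd hr _ hst
        (support_pair (P1_ne_P2 hd hr) one_ne_zero one_ne_zero) hmin
    · subst ha; subst hb
      exact min_contra hd hr _ hst
        (by rw [support_pair (Ne.symm (P1_ne_P2 hd hr)) one_ne_zero one_ne_zero,
          Finset.pair_comm]) hmin

/-- every circuit has zero coefficient at every divisor of `x_{p0} x_{p3}`. -/
lemma circuit_coeff (hd : 2 ≤ d) (hr : 3 ≤ r) {g : MvPolynomial (Idx d r) K}
    (hg : IsCircuit (toricIdeal K (Vconfig d r)) g) {w : Idx d r →₀ ℕ}
    (hw : w ≤ uexp hd hr) : MvPolynomial.coeff w g = 0 := by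
  classical
  obtain ⟨⟨s, t, hst, rfl⟩, hmem, hirr, hmin⟩ := hg
  rw [coeff_binom]
  have hsw : s ≠ w := fun h => no_divisor hd hr hst hmem hmin (h ▸ hw)
  have htw : t ≠ w := by
    intro hweq
    have hmem' : binom K t s ∈ toricIdeal K (Vconfig d r) := by
      rw [show binom K t s = -(binom K s t) by rw [binom, binom, neg_sub]]
      exact neg_mem hmem
    have hmin' : ∀ g' ∈ toricIdeal K (Vconfig d r), IsBinomial g' →
        ¬(g'.vars ⊂ (binom K t s).vars) := by
      intro g' hg' hb' hss
      apply hmin g' hg' hb'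
      rwa [vars_binom (Ne.symm hst), Finset.union_comm, ← vars_binom (K := K) hst] at hss
    exact no_divisor hd hr (Ne.symm hst) hmem' hmin' (hweq ▸ hw)
  simp [hsw, htw]

end VeroneseCircuits
/-- For `r ≥ 3` the toric ideal of the `r`-th Veronese configuration is not generated by
its circuits; in particular it is not generated by `C_A^sf`. -/
theorem veronese_not_generated_by_circuits (d r : ℕ) (hd : 2 ≤ d) (hr : 3 ≤ r)
    (K : Type*) [Field K] :
    toricIdeal K (Vconfig d r) ≠
        Ideal.span (Circuits K (toricIdeal K (Vconfig d r))) ∧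
      toricIdeal K (Vconfig d r) ≠
        Ideal.span (CircuitsSF K (toricIdeal K (Vconfig d r))) := by
  classical
  open VeroneseCircuits in
  have hf : binom K (uexp hd hr) (vexp hd hr) ∈ toricIdeal K (Vconfig d r) :=
    VeroneseCircuits.f_mem hd hr
  have hnot : binom K (uexp hd hr) (vexp hd hr) ∉
      Ideal.span (Circuits K (toricIdeal K (Vconfig d r))) := by
    intro hmem
    have key : ∀ w ≤ uexp hd hr,
        MvPolynomial.coeff w (binom K (uexp hd hr) (vexp hd hr)) = 0 := by
      refine Submodule.span_induction
        (p := fun p _ => ∀ w ≤ uexp hd hr, MvPolynomial.coeff w p = 0)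
        (fun g hg w hw => VeroneseCircuits.circuit_coeff hd hr hg hw)
        (fun w _ => by simp)
        (fun x y hx hy ihx ihy w hw => by
          rw [MvPolynomial.coeff_add, ihx w hw, ihy w hw, add_zero])
        (fun a x hx ihx w hw => by
          rw [smul_eq_mul, MvPolynomial.coeff_mul]
          apply Finset.sum_eq_zero
          intro z hz
          have hz2 : z.2 ≤ w := by
            have := Finset.HasAntidiagonal.mem_antidiagonal.mp hz
            calc z.2 ≤ z.1 + z.2 := le_add_self
            _ = w := this
          rw [ihx z.2 (le_trans hz2 hw), mul_zero])
        hmem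
    have h1 := key (uexp hd hr) le_rfl
    rw [VeroneseCircuits.coeff_binom] at h1
    simp [VeroneseCircuits.uexp_ne_vexp hd hr,
      (VeroneseCircuits.uexp_ne_vexp hd hr).symm] at h1
  constructor
  · intro h
    exact hnot (h ▸ hf)
  · intro h
    apply hnot
    have hsub : CircuitsSF K (toricIdeal K (Vconfig d r)) ⊆
        Circuits K (toricIdeal K (Vconfig d r)) := fun x hx => hx.1
    exact Ideal.span_mono hsub (h ▸ hf)
end

section
/- Let G be a finite connected simple graph with the property that no induced subgraph of G consists of two odd cycles C_1, C_2 having no common vertex together with a path of length ≥ 2 connecting a vertex of C_1 and a vertex of C_2. Let C and C′ be odd cycles of G having no common vertex and let Γ be a path of G joining a vertex v of C to a vertex v′ of C′. Then at least one of the following holds: (a) there is an edge of G joining a vertex of C with a vertex of C′; (b) there is an edge {p,q} of G not belonging to Γ, joining a vertex p of C with a vertex q of Γ with q ≠ v; (c) there is an edge {p,q} of G not belonging to Γ, joining a vertex p of C′ with a vertex q of Γ with q ≠ v′. -/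
open MvPolynomial

/-- The monomial `t_i t_j` associated with an edge `{i, j}`. -/
noncomputable def edgeMonomial {V : Type*} (K : Type*) [Field K] (e : Sym2 V) :
    MvPolynomial V K :=
  Sym2.lift ⟨fun i j => MvPolynomial.X i * MvPolynomial.X j,
    fun _ _ => mul_comm _ _⟩ e

/-- The algebra map sending the variable of an edge `{i, j}` of `G` to `t_i t_j`. -/
noncomputable def graphMap {V : Type*} (K : Type*) [Field K] (G : SimpleGraph V) :
    MvPolynomial G.edgeSet K →ₐ[K] MvPolynomial V K :=
  MvPolynomial.aeval fun e => edgeMonomial K e.1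

/-- The toric ideal `I_{A_G}` of the graph `G`. -/
noncomputable def graphToricIdeal {V : Type*} (K : Type*) [Field K] (G : SimpleGraph V) :
    Ideal (MvPolynomial G.edgeSet K) :=
  RingHom.ker (graphMap K G).toRingHom

/-- `G` contains, as an induced subgraph, two vertex-disjoint odd cycles together with a
path of length at least `ℓ` joining a vertex of the first cycle to a vertex of the
second cycle (the path meeting the cycles only in its endpoints). -/
def HasTwoOddCyclesJoinedByPath {V : Type*} (G : SimpleGraph V) (ℓ : ℕ) : Prop :=
  ∃ (v₁ v₂ : V) (c₁ : G.Walk v₁ v₁) (c₂ : G.Walk v₂ v₂) (p : G.Walk v₁ v₂),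
    c₁.IsCycle ∧ c₂.IsCycle ∧ Odd c₁.length ∧ Odd c₂.length ∧
    p.IsPath ∧ ℓ ≤ p.length ∧
    (∀ x ∈ c₁.support, x ∉ c₂.support) ∧
    (∀ x ∈ p.support, x ∈ c₁.support → x = v₁) ∧
    (∀ x ∈ p.support, x ∈ c₂.support → x = v₂) ∧
    (∀ a b : V, G.Adj a b →
      (a ∈ c₁.support ∨ a ∈ c₂.support ∨ a ∈ p.support) →
      (b ∈ c₁.support ∨ b ∈ c₂.support ∨ b ∈ p.support) →
      (s(a, b) ∈ c₁.edges ∨ s(a, b) ∈ c₂.edges ∨ s(a, b) ∈ p.edges))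


section AuxKLSection
open SimpleGraph Walk
variable {V : Type*} {G : SimpleGraph V}
namespace AuxKL
section
variable [DecidableEq V]
set_option linter.unusedSectionVars false





lemma pathSplit {a b u : V} {p : G.Walk a b} (hp : p.IsPath) (h : u ∈ p.support) :
    ∀ z ∈ (p.takeUntil u h).support, z ∈ (p.dropUntil u h).support → z = u := by
  intro z hz1 hz2
  have hs := congrArg Walk.support (p.take_spec h)
  rw [Walk.support_append] at hs
  have hnd : p.support.Nodup := hp.support_nodup
  rw [← hs] at hnd
  rw [(p.dropUntil u h).support_eq_cons] at hz2
  rcases List.mem_cons.mp hz2 with h' | h'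
  · exact h'
  · exact absurd h' (List.disjoint_of_nodup_append hnd hz1)

lemma pathEnd {a b u : V} {p : G.Walk a b} (hp : p.IsPath) (h : u ∈ p.support) (hub : u ≠ b) :
    b ∉ (p.takeUntil u h).support := by
  intro hb
  have : b ∈ (p.dropUntil u h).support := Walk.end_mem_support _
  exact hub (pathSplit hp h b hb this).symm

lemma pathStart {a b u : V} {p : G.Walk a b} (hp : p.IsPath) (h : u ∈ p.support) (hua : u ≠ a) :
    a ∉ (p.dropUntil u h).support := by
  intro ha
  have : a ∈ (p.takeUntil u h).support := Walk.start_mem_support _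
  exact hua (pathSplit hp h a this ha).symm

/-- positions on a walk are comparable -/
lemma comparable {a b : V} (p : G.Walk a b) (x y : V) (hx : x ∈ p.support)
    (hy : y ∈ p.support) :
    y ∈ (p.dropUntil x hx).support ∨ x ∈ (p.dropUntil y hy).support := by
  induction p with
  | nil =>
    rw [Walk.mem_support_nil_iff] at hx hy
    subst hx; subst hy; left; exact Walk.start_mem_support _
  | @cons u v w h q ih =>
    by_cases hxu : u = x
    · left; subst hxu
      simpa [Walk.dropUntil, dif_pos rfl] using hy
    · by_cases hyu : u = y
      · right; subst hyu
        simpa [Walk.dropUntil, dif_pos rfl] using hx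
      · have hx' : x ∈ q.support := by
          have := hx; rw [Walk.support_cons] at this
          rcases List.mem_cons.mp this with h' | h'
          · exact absurd h'.symm hxu
          · exact h'
        have hy' : y ∈ q.support := by
          have := hy; rw [Walk.support_cons] at this
          rcases List.mem_cons.mp this with h' | h'
          · exact absurd h'.symm hyu
          · exact h'
        have e1 : (Walk.cons h q).dropUntil x hx = q.dropUntil x hx' := by
          simp [Walk.dropUntil, dif_neg hxu]
        have e2 : (Walk.cons h q).dropUntil y hy = q.dropUntil y hy' := by
          simp [Walk.dropUntil, dif_neg hyu]
        rw [e1, e2]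
        exact ih hx' hy'

lemma length_take_add_drop {a b u : V} (p : G.Walk a b) (h : u ∈ p.support) :
    (p.takeUntil u h).length + (p.dropUntil u h).length = p.length := by
  have := congrArg Walk.length (p.take_spec h)
  rwa [Walk.length_append] at this


/-- appending two paths that intersect only at the gluing point -/
lemma append_isPath {a b c : V} {p : G.Walk a b} {q : G.Walk b c} (hp : p.IsPath)
    (hq : q.IsPath) (hint : ∀ z ∈ p.support, z ∈ q.support → z = b) :
    (p.append q).IsPath := by
  rw [Walk.isPath_def, Walk.support_append, List.nodup_append]
  refine ⟨hp.support_nodup, hq.support_nodup.tail, ?_⟩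
  intro z hz1 z' hz2 hzz
  rw [← hzz] at hz2
  have hz2' : z ∈ q.support := by
    rw [q.support_eq_cons]; exact List.mem_cons_of_mem _ hz2
  have hzb : z = b := hint z hz1 hz2'
  subst hzb
  have : z ∉ q.support.tail := by
    have := hq.support_nodup
    rw [q.support_eq_cons] at this
    exact (List.nodup_cons.mp this).1
  exact this hz2

lemma concat_isPath {a b c : V} {p : G.Walk a b} (hp : p.IsPath) (h : G.Adj b c)
    (hc : c ∉ p.support) : (p.concat h).IsPath := by
  rw [Walk.isPath_def, Walk.support_concat, List.nodup_append]
  refine ⟨hp.support_nodup, List.nodup_singleton _, ?_⟩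
  intro z hz1 z' hz2 hzz
  rw [← hzz] at hz2
  simp only [List.mem_singleton] at hz2
  subst hz2
  exact hc hz1

lemma mem_support_concat {a b c z : V} (p : G.Walk a b) (h : G.Adj b c) :
    z ∈ (p.concat h).support ↔ z ∈ p.support ∨ z = c := by
  rw [Walk.support_concat, List.mem_append, List.mem_singleton]

lemma mem_edges_concat {a b c : V} (p : G.Walk a b) (h : G.Adj b c) (e : Sym2 V) :
    e ∈ (p.concat h).edges ↔ e ∈ p.edges ∨ e = s(b, c) := by
  rw [Walk.edges_concat, List.concat_eq_append, List.mem_append, List.mem_singleton]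

/-- prefixing a path with an edge back to the start gives a cycle -/
lemma cons_isCycle' {x y : V} {P : G.Walk y x} (hP : P.IsPath) (h : G.Adj x y)
    (he : s(x, y) ∉ P.edges) : (Walk.cons h P).IsCycle :=
  (Walk.cons_isCycle_iff P h).mpr ⟨hP, he⟩

/-- closing a path with an edge gives a cycle -/
lemma concat_isCycle {x y : V} {P : G.Walk x y} (hP : P.IsPath) (h : G.Adj y x)
    (he : s(y, x) ∉ P.edges) : (P.concat h).IsCycle := by
  have hxy : x ≠ y := fun hh => by subst hh; exact G.irrefl h
  constructor
  · constructor
    · rw [Walk.isTrail_def, Walk.edges_concat, List.concat_eq_append]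
      rw [List.nodup_append]
      refine ⟨hP.isTrail.edges_nodup, List.nodup_singleton _, ?_⟩
      intro e he1 e' he2 hee
      rw [← hee] at he2
      simp only [List.mem_singleton] at he2
      subst he2
      exact he he1
    · exact Walk.concat_ne_nil _ _
  · rw [Walk.support_concat]
    rw [P.support_eq_cons, List.cons_append, List.tail_cons, List.nodup_append]
    have hnd := hP.support_nodup
    rw [P.support_eq_cons, List.nodup_cons] at hnd
    refine ⟨hnd.2, List.nodup_singleton _, ?_⟩
    intro z hz1 z' hz2 hzz
    rw [← hzz] at hz2
    simp only [List.mem_singleton] at hz2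
    subst hz2
    exact hnd.1 hz1



lemma len1_edge {a b : V} (r : G.Walk a b) (h : r.length = 1) : s(a, b) ∈ r.edges := by
  cases r with
  | nil => simp at h
  | cons hadj q =>
    cases q with
    | nil => simp
    | cons h' q' => simp [Walk.length_cons] at h

lemma mem_tail_of_closed {u : V} (d : G.Walk u u) (hd : ¬ d.Nil) (z : V) :
    z ∈ d.support ↔ z ∈ d.support.tail := by
  rw [d.support_eq_cons]
  simp only [List.mem_cons]
  constructor
  · rintro (rfl | hx)
    · cases d with
      | nil => exact absurd Walk.nil_nil hd
      | cons h' q => simpa using Walk.end_mem_support q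
    · exact hx
  · exact fun hx => Or.inr hx


lemma length_rotate {w u : V} (c : G.Walk w w) (h : u ∈ c.support) :
    (c.rotate u h).length = c.length := by
  rw [Walk.rotate, Walk.length_append, Nat.add_comm, length_take_add_drop]

lemma mem_support_rotate {w u z : V} (c : G.Walk w w) (hn : ¬ c.Nil) (h : u ∈ c.support) :
    z ∈ (c.rotate u h).support ↔ z ∈ c.support := by
  have hn' : ¬ (c.rotate u h).Nil := by
    rw [Walk.nil_iff_length_eq, length_rotate]
    rwa [Walk.nil_iff_length_eq] at hn
  rw [mem_tail_of_closed _ hn', mem_tail_of_closed _ hn]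
  exact (Walk.support_rotate c u h).mem_iff

lemma mem_edges_rotate {w u : V} (c : G.Walk w w) (h : u ∈ c.support) (e : Sym2 V) :
    e ∈ (c.rotate u h).edges ↔ e ∈ c.edges :=
  (Walk.rotate_edges c u h).mem_iff


/-- any nonnil walk into b has a last edge -/
lemma exists_edge_end {a b : V} (q : G.Walk a b) (hq : ¬ q.Nil) :
    ∃ y, s(y, b) ∈ q.edges := by
  induction q with
  | nil => exact absurd Walk.nil_nil hq
  | @cons u v w h p ih =>
    cases p with
    | nil => exact ⟨u, by simp⟩
    | cons h' p' =>
      obtain ⟨y, hy⟩ := ih (by simp)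
      exact ⟨y, by rw [Walk.edges_cons]; exact List.mem_cons_of_mem _ hy⟩

/-- a vertex of a cycle has two distinct neighbors along the cycle -/
lemma cycle_two_neighbors [DecidableEq V] {w u : V} {c : G.Walk w w} (hc : c.IsCycle)
    (hu : u ∈ c.support) :
    ∃ z₁ z₂, z₁ ≠ z₂ ∧ s(z₁, u) ∈ c.edges ∧ s(z₂, u) ∈ c.edges := by
  -- rotate to u
  have hrot := hc.rotate hu
  set d := c.rotate u hu with hd
  suffices h : ∃ z₁ z₂, z₁ ≠ z₂ ∧ s(z₁, u) ∈ d.edges ∧ s(z₂, u) ∈ d.edges by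
    obtain ⟨z₁, z₂, h1, h2, h3⟩ := h
    exact ⟨z₁, z₂, h1, (mem_edges_rotate c hu _).mp h2, (mem_edges_rotate c hu _).mp h3⟩
  clear_value d
  clear hd hu
  cases d with
  | nil => exact absurd rfl hrot.ne_nil
  | @cons _ x _ h p =>
    have hnp : ¬ p.Nil := by
      intro hnil
      have := hrot.three_le_length
      rw [Walk.nil_iff_length_eq] at hnil
      simp [Walk.length_cons, hnil] at this
    obtain ⟨y, hy⟩ := exists_edge_end p hnp
    refine ⟨x, y, ?_, ?_, ?_⟩
    · rintro rfl
      -- then s(x,u) ∈ p.edges, but s(u,x) is the head edge; trail nodup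
      have := hrot.isTrail.edges_nodup
      rw [Walk.edges_cons, List.nodup_cons] at this
      rw [Sym2.eq_swap] at hy
      exact this.1 hy
    · rw [Walk.edges_cons]; exact List.mem_cons.mpr (Or.inl Sym2.eq_swap)
    · rw [Walk.edges_cons]; exact List.mem_cons_of_mem _ hy



/-- in a path, at most one edge joins the start vertex -/
lemma start_edge_unique {u t a b : V} {q : G.Walk u t} (hq : q.IsPath)
    (ha : s(a, u) ∈ q.edges) (hb : s(b, u) ∈ q.edges) : a = b := by
  cases q with
  | nil => simp at ha
  | @cons _ x _ h p =>
    have hup : u ∉ p.support := ((Walk.cons_isPath_iff h p).mp hq).2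
    have key : ∀ z, s(z, u) ∈ (Walk.cons h p).edges → z = x := by
      intro z hz
      rw [Walk.edges_cons, List.mem_cons] at hz
      rcases hz with hz | hz
      · rw [Sym2.eq_iff] at hz
        rcases hz with ⟨h1, h2⟩ | ⟨h1, _⟩
        · exact h1.trans h2
        · exact h1
      · exact absurd (Walk.snd_mem_support_of_mem_edges p hz) hup
    rw [key a ha, key b hb]

/-- in a path, at most two edges are incident to any vertex -/
lemma three_incident {u : V} : ∀ {s t a b c : V} {q : G.Walk s t}, q.IsPath →
    s(a, u) ∈ q.edges → s(b, u) ∈ q.edges → s(c, u) ∈ q.edges →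
    a = b ∨ a = c ∨ b = c := by
  intro s t a b c q hq ha hb hc
  induction q with
  | nil => simp at ha
  | @cons s x t h p ih =>
    have hsp : s ∉ p.support := ((Walk.cons_isPath_iff h p).mp hq).2
    have hp' : p.IsPath := hq.of_cons
    have classify : ∀ z, s(z, u) ∈ (Walk.cons h p).edges →
        (z = x ∧ u = s) ∨ (z = s ∧ u = x) ∨ s(z, u) ∈ p.edges := by
      intro z hz
      rw [Walk.edges_cons, List.mem_cons] at hz
      rcases hz with hz | hz
      · rw [Sym2.eq_iff] at hz
        rcases hz with ⟨rfl, rfl⟩ | ⟨rfl, rfl⟩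
        · exact Or.inr (Or.inl ⟨rfl, rfl⟩)
        · exact Or.inl ⟨rfl, rfl⟩
      · exact Or.inr (Or.inr hz)
    by_cases hus : u = s
    · -- all edges must be the head edge
      have key : ∀ z, s(z, u) ∈ (Walk.cons h p).edges → z = x := by
        intro z hz
        rcases classify z hz with ⟨rfl, _⟩ | ⟨rfl, huu⟩ | hz'
        · rfl
        · exact absurd (hus.symm.trans huu) h.ne
        · exact absurd (hus ▸ Walk.snd_mem_support_of_mem_edges p hz') hsp
      exact Or.inl ((key a ha).trans (key b hb).symm)
    · have classify2 : ∀ z, s(z, u) ∈ (Walk.cons h p).edges →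
          (z = s ∧ u = x) ∨ s(z, u) ∈ p.edges := by
        intro z hz
        rcases classify z hz with ⟨_, huu⟩ | h2 | h3
        · exact absurd huu hus
        · exact Or.inl h2
        · exact Or.inr h3
      by_cases hux : u = x
      · subst hux
        have key : ∀ z, s(z, u) ∈ (Walk.cons h p).edges →
            z = s ∨ s(z, u) ∈ p.edges := fun z hz => (classify2 z hz).imp And.left id
        rcases key a ha with ha' | ha' <;> rcases key b hb with hb' | hb' <;>
          rcases key c hc with hc' | hc'
        · exact Or.inl (ha'.trans hb'.symm)
        · exact Or.inl (ha'.trans hb'.symm)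
        · exact Or.inr (Or.inl (ha'.trans hc'.symm))
        · exact Or.inr (Or.inr (start_edge_unique hp' hb' hc'))
        · exact Or.inr (Or.inr (hb'.trans hc'.symm))
        · exact Or.inr (Or.inl (start_edge_unique hp' ha' hc'))
        · exact Or.inl (start_edge_unique hp' ha' hb')
        · exact Or.inl (start_edge_unique hp' ha' hb')
      · have key : ∀ z, s(z, u) ∈ (Walk.cons h p).edges → s(z, u) ∈ p.edges := by
          intro z hz
          rcases classify2 z hz with ⟨_, huu⟩ | h3
          · exact absurd huu hux
          · exact h3
        exact ih hp' (key a ha) (key b hb) (key c hc)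



lemma step1_aux {v t : V} {c : G.Walk v v} (hc : c.IsCycle) {p0 : G.Walk v t}
    (hp0 : p0.IsPath) (ht : t ∉ c.support)
    (hB : ∀ a b, G.Adj a b → a ∈ c.support → b ∈ p0.support → b ≠ v → s(a, b) ∈ p0.edges) :
    ∀ {u} (q : G.Walk u t), q.IsPath → u ∈ c.support → v ∉ q.support →
      (∀ z ∈ q.support, z ∈ p0.support) → (∀ e ∈ q.edges, e ∈ p0.edges) → False := by
  intro u q
  induction q with
  | nil => intro _ hu _ _ _; exact ht hu
  | @cons u z' _ h q' ih =>
    intro hq hu hv hsub hesub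
    have huv : u ≠ v := fun hh => hv (hh ▸ Walk.start_mem_support _)
    obtain ⟨z₁, z₂, hz12, he1, he2⟩ := cycle_two_neighbors hc hu
    have hup0 : u ∈ p0.support := hsub u (Walk.start_mem_support _)
    have hp1 : s(z₁, u) ∈ p0.edges :=
      hB z₁ u (c.adj_of_mem_edges he1) (Walk.fst_mem_support_of_mem_edges c he1) hup0 huv
    have hp2 : s(z₂, u) ∈ p0.edges :=
      hB z₂ u (c.adj_of_mem_edges he2) (Walk.fst_mem_support_of_mem_edges c he2) hup0 huv
    have hp3 : s(z', u) ∈ p0.edges := by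
      rw [Sym2.eq_swap]
      exact hesub _ (by rw [Walk.edges_cons]; exact List.mem_cons_self)
    have hz' : z' ∈ c.support := by
      rcases three_incident hp0 hp1 hp2 hp3 with h' | h' | h'
      · exact absurd h' hz12
      · exact h' ▸ Walk.fst_mem_support_of_mem_edges c he1
      · exact h' ▸ Walk.fst_mem_support_of_mem_edges c he2
    exact ih hp0 ht hB hq.of_cons hz'
      (fun hh => hv (by rw [Walk.support_cons]; exact List.mem_cons_of_mem _ hh))
      (fun z hz => hsub z (by rw [Walk.support_cons]; exact List.mem_cons_of_mem _ hz))
      (fun e he => hesub e (by rw [Walk.edges_cons]; exact List.mem_cons_of_mem _ he))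

lemma step1 [DecidableEq V] {v t : V} {c : G.Walk v v} (hc : c.IsCycle) {p0 : G.Walk v t}
    (hp0 : p0.IsPath) (ht : t ∉ c.support)
    (hB : ∀ a b, G.Adj a b → a ∈ c.support → b ∈ p0.support → b ≠ v → s(a, b) ∈ p0.edges) :
    ∀ x ∈ p0.support, x ∈ c.support → x = v := by
  intro x hx hxc
  by_contra hxv
  have hq : (p0.dropUntil x hx).IsPath := hp0.dropUntil hx
  have hvq : v ∉ (p0.dropUntil x hx).support := by
    intro hv
    exact hxv (pathSplit hp0 hx v (Walk.start_mem_support _) hv).symm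
  exact step1_aux hc hp0 ht hB (p0.dropUntil x hx) hq hxc hvq
    (fun z hz => Walk.support_dropUntil_subset _ _ hz)
    (fun e he => Walk.edges_dropUntil_subset _ _ he)




-- from h2
/-- splitting a cycle at a non-base vertex gives two paths meeting only at the two vertices -/
lemma cycSplit {w x : V} {c : G.Walk w w} (hc : c.IsCycle) (hx : x ∈ c.support)
    (hxw : x ≠ w) :
    (c.takeUntil x hx).IsPath ∧ (c.dropUntil x hx).IsPath ∧
      (∀ u, u ∈ (c.takeUntil x hx).support → u ∈ (c.dropUntil x hx).support →
        u = x ∨ u = w) := by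
  set d1 := c.takeUntil x hx with hd1
  set d2 := c.dropUntil x hx with hd2
  have hs := congrArg Walk.support (c.take_spec hx)
  rw [Walk.support_append] at hs
  have hsplit : c.support.tail = d1.support.tail ++ d2.support.tail := by
    have h1 : c.support = w :: c.support.tail := c.support_eq_cons
    have h2 : d1.support = w :: d1.support.tail := d1.support_eq_cons
    rw [h2] at hs
    rw [List.cons_append] at hs
    have h3 := hs.trans h1
    exact ((List.cons.injEq _ _ _ _).mp h3).2.symm
  have hnd : (d1.support.tail ++ d2.support.tail).Nodup := hsplit ▸ hc.support_nodup
  have hwd2 : w ∈ d2.support.tail := Walk.end_mem_tail_support_of_ne hxw d2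
  have hwd1 : w ∉ d1.support.tail := fun hmem =>
    List.disjoint_of_nodup_append hnd hmem hwd2
  have hxd1 : x ∈ d1.support.tail := Walk.end_mem_tail_support_of_ne (Ne.symm hxw) d1
  have hxd2 : x ∉ d2.support.tail := fun hmem =>
    List.disjoint_of_nodup_append hnd hxd1 hmem
  have hp1 : d1.IsPath := by
    rw [Walk.isPath_def, d1.support_eq_cons, List.nodup_cons]
    exact ⟨hwd1, (List.nodup_append.mp hnd).1⟩
  have hp2 : d2.IsPath := by
    rw [Walk.isPath_def, d2.support_eq_cons, List.nodup_cons]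
    exact ⟨hxd2, (List.nodup_append.mp hnd).2.1⟩
  refine ⟨hp1, hp2, ?_⟩
  intro u hu1 hu2
  rw [d1.support_eq_cons, List.mem_cons] at hu1
  rw [d2.support_eq_cons, List.mem_cons] at hu2
  rcases hu1 with rfl | hu1
  · exact Or.inr rfl
  · rcases hu2 with rfl | hu2
    · exact Or.inl rfl
    · exact absurd hu2 (List.disjoint_of_nodup_append hnd hu1)

/-- a path with a chord can be shortened (ordered version) -/
lemma chord_shorten_ord {a b x y : V} {p : G.Walk a b} (hp : p.IsPath) (hadj : G.Adj x y)
    (hx : x ∈ p.support) (hord : y ∈ (p.dropUntil x hx).support) (he : s(x, y) ∉ p.edges) :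
    ∃ q : G.Walk a b, q.IsPath ∧ (∀ u ∈ q.support, u ∈ p.support) ∧ q.length < p.length := by
  set t := p.takeUntil x hx with ht
  set d := p.dropUntil x hx with hd
  have htp : t.IsPath := hp.takeUntil hx
  have hdp : d.IsPath := hp.dropUntil hx
  set d2 := d.dropUntil y hord with hd2
  have hd2p : d2.IsPath := hdp.dropUntil hord
  have hxd2 : x ∉ d2.support := pathStart hdp hord (Ne.symm hadj.ne)
  have hcons : (Walk.cons hadj d2).IsPath := hd2p.cons hxd2
  have hglue : ∀ u ∈ t.support, u ∈ (Walk.cons hadj d2).support → u = x := by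
    intro u hu1 hu2
    rw [Walk.support_cons, List.mem_cons] at hu2
    rcases hu2 with rfl | hu2
    · rfl
    · exact pathSplit hp hx u hu1 (Walk.support_dropUntil_subset d hord hu2)
  refine ⟨t.append (Walk.cons hadj d2), append_isPath htp hcons hglue, ?_, ?_⟩
  · intro u hu
    rw [Walk.mem_support_append_iff] at hu
    rcases hu with hu | hu
    · exact Walk.support_takeUntil_subset _ _ hu
    · rw [Walk.support_cons, List.mem_cons] at hu
      rcases hu with rfl | hu
      · exact hx
      · exact Walk.support_dropUntil_subset _ _ (Walk.support_dropUntil_subset d hord hu)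
  · have h1 : t.length + d.length = p.length := length_take_add_drop p hx
    have h2 : (d.takeUntil y hord).length + d2.length = d.length := length_take_add_drop d hord
    have h3 : 2 ≤ (d.takeUntil y hord).length := by
      rcases Nat.lt_or_ge (d.takeUntil y hord).length 2 with hlt | hge
      · interval_cases hh : (d.takeUntil y hord).length
        · exact absurd (Walk.eq_of_length_eq_zero hh) hadj.ne
        · exact absurd (Walk.edges_dropUntil_subset p hx
            (Walk.edges_takeUntil_subset d hord (len1_edge _ hh))) he
      · exact hge
    rw [Walk.length_append, Walk.length_cons]
    omega

/-- a path with a chord can be shortened -/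
lemma chord_shorten {a b x y : V} {p : G.Walk a b} (hp : p.IsPath) (hadj : G.Adj x y)
    (hx : x ∈ p.support) (hy : y ∈ p.support) (he : s(x, y) ∉ p.edges) :
    ∃ q : G.Walk a b, q.IsPath ∧ (∀ u ∈ q.support, u ∈ p.support) ∧ q.length < p.length := by
  rcases comparable p x y hx hy with hord | hord
  · exact chord_shorten_ord hp hadj hx hord he
  · exact chord_shorten_ord hp hadj.symm hy hord (by rwa [Sym2.eq_swap])

/-- every path can be refined to an induced path with the same endpoints -/
lemma exists_induced_path {a b : V} (p : G.Walk a b) (hp : p.IsPath) :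
    ∃ q : G.Walk a b, q.IsPath ∧ (∀ u ∈ q.support, u ∈ p.support) ∧ q.length ≤ p.length ∧
      (∀ x y, G.Adj x y → x ∈ q.support → y ∈ q.support → s(x, y) ∈ q.edges) := by
  suffices H : ∀ (n : ℕ) {a b : V} (p : G.Walk a b), p.length ≤ n → p.IsPath →
      ∃ q : G.Walk a b, q.IsPath ∧ (∀ u ∈ q.support, u ∈ p.support) ∧ q.length ≤ p.length ∧
        (∀ x y, G.Adj x y → x ∈ q.support → y ∈ q.support → s(x, y) ∈ q.edges) by
    exact H p.length p le_rfl hp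
  intro n
  induction n with
  | zero =>
    intro a b p hl hp
    by_cases hind : ∀ x y, G.Adj x y → x ∈ p.support → y ∈ p.support → s(x, y) ∈ p.edges
    · exact ⟨p, hp, fun u hu => hu, le_rfl, hind⟩
    · push_neg at hind
      obtain ⟨x, y, hadj, hx, hy, he⟩ := hind
      obtain ⟨q, hq, hsub, hlen⟩ := chord_shorten hp hadj hx hy he
      omega
  | succ n ih =>
    intro a b p hl hp
    by_cases hind : ∀ x y, G.Adj x y → x ∈ p.support → y ∈ p.support → s(x, y) ∈ p.edges
    · exact ⟨p, hp, fun u hu => hu, le_rfl, hind⟩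
    · push_neg at hind
      obtain ⟨x, y, hadj, hx, hy, he⟩ := hind
      obtain ⟨q, hq, hsub, hlen⟩ := chord_shorten hp hadj hx hy he
      obtain ⟨r, hr1, hr2, hr3, hr4⟩ := ih q (by omega) hq
      exact ⟨r, hr1, fun u hu => hsub u (hr2 u hu), by omega, hr4⟩


/-- shrinking a cycle with a chord at its base vertex -/
lemma surgery_chord_base {w y : V} {k : G.Walk w w} (hk : k.IsCycle) (hodd : Odd k.length)
    (hadj : G.Adj w y) (hy : y ∈ k.support) (hyw : y ≠ w) (he : s(w, y) ∉ k.edges) :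
    ∃ k' : G.Walk w w, k'.IsCycle ∧ Odd k'.length ∧ (∀ z ∈ k'.support, z ∈ k.support) ∧
      k'.length < k.length := by
  obtain ⟨hp1, hp2, hint⟩ := cycSplit hk hy hyw
  set d1 := k.takeUntil y hy with hd1
  set d2 := k.dropUntil y hy with hd2
  have hlen : d1.length + d2.length = k.length := length_take_add_drop k hy
  have hL1 : 2 ≤ d1.length := by
    rcases Nat.lt_or_ge d1.length 2 with hlt | hge
    · interval_cases hh : d1.length
      · exact absurd (Walk.eq_of_length_eq_zero hh).symm hyw
      · exact absurd (Walk.edges_takeUntil_subset k hy (len1_edge _ hh)) he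
    · exact hge
  have hL2 : 2 ≤ d2.length := by
    rcases Nat.lt_or_ge d2.length 2 with hlt | hge
    · interval_cases hh : d2.length
      · exact absurd (Walk.eq_of_length_eq_zero hh) hyw
      · refine absurd (Walk.edges_dropUntil_subset k hy (len1_edge _ hh)) ?_
        rwa [Sym2.eq_swap]
    · exact hge
  have hZ1 : (d1.concat hadj.symm).IsCycle := by
    refine concat_isCycle hp1 hadj.symm ?_
    intro hmem
    exact he (by rw [Sym2.eq_swap] at hmem; exact Walk.edges_takeUntil_subset k hy hmem)
  have hZ2 : (Walk.cons hadj d2).IsCycle := by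
    refine cons_isCycle' hp2 hadj ?_
    exact fun hmem => he (Walk.edges_dropUntil_subset k hy hmem)
  have hlZ1 : (d1.concat hadj.symm).length = d1.length + 1 := Walk.length_concat _ _
  have hlZ2 : (Walk.cons hadj d2).length = d2.length + 1 := Walk.length_cons _ _
  have hoddk := hodd
  rw [Nat.odd_iff] at hoddk
  rcases Nat.even_or_odd (d1.length + 1) with hpar | hpar
  · -- Z2 odd
    refine ⟨Walk.cons hadj d2, hZ2, ?_, ?_, by omega⟩
    · rw [hlZ2, Nat.odd_iff]
      rw [Nat.even_iff] at hpar
      omega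
    · intro z hz
      rw [Walk.support_cons, List.mem_cons] at hz
      rcases hz with rfl | hz
      · exact Walk.start_mem_support k
      · exact Walk.support_dropUntil_subset k hy hz
  · refine ⟨d1.concat hadj.symm, hZ1, by rwa [hlZ1], ?_, by omega⟩
    intro z hz
    rw [mem_support_concat] at hz
    rcases hz with hz | rfl
    · exact Walk.support_takeUntil_subset k hy hz
    · exact Walk.start_mem_support k

/-- shrinking a cycle with a chord not at the base vertex -/
lemma surgery_chord_mid {v w x y : V} {c : G.Walk v v} {k : G.Walk w w} {qa : G.Walk v w}
    (hk : k.IsCycle) (hodd : Odd k.length)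
    (hksub : ∀ z ∈ k.support, z ∈ c.support)
    (hqa : qa.IsPath) (hqasub : ∀ z ∈ qa.support, z ∈ c.support)
    (hmeet : ∀ z ∈ qa.support, z ∈ k.support → z = w)
    (hadj : G.Adj x y) (hx : x ∈ k.support) (hxw : x ≠ w) (hyw : y ≠ w)
    (hord : y ∈ (k.dropUntil x hx).support) (he : s(x, y) ∉ k.edges) :
    ∃ (w' : V) (k' : G.Walk w' w') (qa' : G.Walk v w'),
      k'.IsCycle ∧ Odd k'.length ∧ (∀ z ∈ k'.support, z ∈ c.support) ∧
      qa'.IsPath ∧ (∀ z ∈ qa'.support, z ∈ c.support) ∧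
      (∀ z ∈ qa'.support, z ∈ k'.support → z = w') ∧
      k'.length + qa'.length < k.length + qa.length := by
  obtain ⟨hd1p, hRp, hint1⟩ := cycSplit hk hx hxw
  set d1 := k.takeUntil x hx with hd1def
  set R := k.dropUntil x hx with hRdef
  have hxy : x ≠ y := hadj.ne
  set P2 := R.takeUntil y hord with hP2def
  set P3 := R.dropUntil y hord with hP3def
  have hP2p : P2.IsPath := hRp.takeUntil hord
  have hP3p : P3.IsPath := hRp.dropUntil hord
  have hintR : ∀ z ∈ P2.support, z ∈ P3.support → z = y := pathSplit hRp hord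
  have f1 : w ∉ P2.support := pathEnd hRp hord hyw
  have f2 : x ∉ P3.support := pathStart hRp hord (Ne.symm hxy)
  have hlk : d1.length + R.length = k.length := length_take_add_drop k hx
  have hlR : P2.length + P3.length = R.length := length_take_add_drop R hord
  -- support subsets
  have hd1sub : ∀ z ∈ d1.support, z ∈ k.support := fun z hz =>
    Walk.support_takeUntil_subset k hx hz
  have hRsub : ∀ z ∈ R.support, z ∈ k.support := fun z hz =>
    Walk.support_dropUntil_subset k hx hz
  have hP2sub : ∀ z ∈ P2.support, z ∈ R.support := fun z hz =>
    Walk.support_takeUntil_subset R hord hz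
  have hP3sub : ∀ z ∈ P3.support, z ∈ R.support := fun z hz =>
    Walk.support_dropUntil_subset R hord hz
  have hP2esub : ∀ e ∈ P2.edges, e ∈ k.edges := fun e heq =>
    Walk.edges_dropUntil_subset k hx (Walk.edges_takeUntil_subset R hord heq)
  have hP3esub : ∀ e ∈ P3.edges, e ∈ k.edges := fun e heq =>
    Walk.edges_dropUntil_subset k hx (Walk.edges_dropUntil_subset R hord heq)
  -- lengths
  have hL1 : 1 ≤ d1.length := by
    rcases Nat.eq_zero_or_pos d1.length with hz | hz
    · exact absurd (Walk.eq_of_length_eq_zero hz).symm hxw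
    · exact hz
  have hL3 : 1 ≤ P3.length := by
    rcases Nat.eq_zero_or_pos P3.length with hz | hz
    · exact absurd (Walk.eq_of_length_eq_zero hz) hyw
    · exact hz
  have hL2 : 2 ≤ P2.length := by
    rcases Nat.lt_or_ge P2.length 2 with hlt | hge
    · interval_cases hh : P2.length
      · exact absurd (Walk.eq_of_length_eq_zero hh) hxy
      · exact absurd (hP2esub _ (len1_edge _ hh)) he
    · exact hge
  -- edge decomposition of k
  have hked : k.edges = d1.edges ++ (P2.edges ++ P3.edges) := by
    have h1 := congrArg Walk.edges (k.take_spec hx)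
    rw [Walk.edges_append] at h1
    have h2 := congrArg Walk.edges (R.take_spec hord)
    rw [Walk.edges_append] at h2
    rw [← h1, ← h2]
  have hknd : (d1.edges ++ (P2.edges ++ P3.edges)).Nodup := hked ▸ hk.isTrail.edges_nodup
  -- the two cycles
  have heyx : s(y, x) ∉ P2.edges := fun hmem => he (by
    rw [Sym2.eq_swap] at hmem
    exact hP2esub _ hmem)
  have hZ1 : (P2.concat hadj.symm).IsCycle := concat_isCycle hP2p hadj.symm heyx
  set Z1 := P2.concat hadj.symm with hZ1def
  have hZ1len : Z1.length = P2.length + 1 := Walk.length_concat _ _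
  have hZ1sub : ∀ z ∈ Z1.support, z ∈ P2.support := by
    intro z hz
    rw [hZ1def, mem_support_concat] at hz
    rcases hz with hz | rfl
    · exact hz
    · exact Walk.start_mem_support P2
  set Z2 := d1.append (Walk.cons hadj P3) with hZ2def
  have hZ2len : Z2.length = d1.length + P3.length + 1 := by
    rw [hZ2def, Walk.length_append, Walk.length_cons]; omega
  have hxyP3 : s(x, y) ∉ P3.edges := fun hmem => he (hP3esub _ hmem)
  have hxyd1 : s(x, y) ∉ d1.edges := fun hmem => he (hked ▸ List.mem_append_left _ hmem)
  have hZ2 : Z2.IsCycle := by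
    refine ⟨⟨?_, ?_⟩, ?_⟩
    · rw [Walk.isTrail_def, hZ2def, Walk.edges_append, Walk.edges_cons, List.nodup_append]
      refine ⟨hd1p.isTrail.edges_nodup, ?_, ?_⟩
      · rw [List.nodup_cons]
        exact ⟨hxyP3, hP3p.isTrail.edges_nodup⟩
      · intro e he1 e' he2 hee
        rw [← hee] at he2
        rw [List.mem_cons] at he2
        rcases he2 with rfl | he2
        · exact hxyd1 he1
        · exact List.disjoint_of_nodup_append hknd he1 (List.mem_append_right _ he2)
    · intro hnil
      have := congrArg Walk.length hnil
      rw [hZ2len] at this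
      simp at this
    · have hsupp : Z2.support = d1.support ++ P3.support := by
        rw [hZ2def, Walk.support_append, Walk.support_cons, List.tail_cons]
      rw [hsupp, d1.support_eq_cons, List.cons_append, List.tail_cons, List.nodup_append]
      refine ⟨?_, hP3p.support_nodup, ?_⟩
      · have := hd1p.support_nodup
        rw [d1.support_eq_cons, List.nodup_cons] at this
        exact this.2
      · intro u hu1 u' hu2 huu
        rw [← huu] at hu2
        have hu1' : u ∈ d1.support := by
          rw [d1.support_eq_cons]; exact List.mem_cons_of_mem _ hu1
        rcases hint1 u hu1' (hP3sub u hu2) with rfl | rfl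
        · exact f2 hu2
        · have := hd1p.support_nodup
          rw [d1.support_eq_cons, List.nodup_cons] at this
          exact this.1 hu1
  have hZ2sub : ∀ z ∈ Z2.support, z ∈ k.support := by
    intro z hz
    rw [hZ2def, Walk.mem_support_append_iff] at hz
    rcases hz with hz | hz
    · exact hd1sub z hz
    · rw [Walk.support_cons, List.mem_cons] at hz
      rcases hz with rfl | hz
      · exact hx
      · exact hRsub z (hP3sub z hz)
  have hoddk := hodd
  rw [Nat.odd_iff] at hoddk
  rcases Nat.even_or_odd Z2.length with hpar | hpar
  · -- Z2 even, so Z1 odd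
    have hZ1odd : Odd Z1.length := by
      rw [Nat.even_iff] at hpar
      rw [Nat.odd_iff, hZ1len]
      rw [hZ2len] at hpar
      omega
    by_cases hL3' : 2 ≤ P3.length
    · -- extend qa along d1 to x
      have hglue : ∀ z ∈ qa.support, z ∈ d1.support → z = w := fun z hz hz' =>
        hmeet z hz (hd1sub z hz')
      refine ⟨x, Z1, qa.append d1, hZ1, hZ1odd, ?_, append_isPath hqa hd1p hglue, ?_, ?_, ?_⟩
      · exact fun z hz => hksub z (hRsub z (hP2sub z (hZ1sub z hz)))
      · intro z hz
        rw [Walk.mem_support_append_iff] at hz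
        rcases hz with hz | hz
        · exact hqasub z hz
        · exact hksub z (hd1sub z hz)
      · intro z hz hz2
        have hzP2 : z ∈ P2.support := hZ1sub z hz2
        rw [Walk.mem_support_append_iff] at hz
        rcases hz with hz | hz
        · have : z = w := hmeet z hz (hRsub z (hP2sub z hzP2))
          exact absurd (this ▸ hzP2) f1
        · rcases hint1 z hz (hP2sub z hzP2) with rfl | rfl
          · rfl
          · exact absurd hzP2 f1
      · rw [hZ1len, Walk.length_append]
        omega
    · -- P3.length = 1, d1 even hence ≥ 2; extend qa along P3.reverse to y
      have hL3e : P3.length = 1 := by omega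
      have hL1' : 2 ≤ d1.length := by
        rw [Nat.even_iff, hZ2len] at hpar
        omega
      have hyZ1 : y ∈ Z1.support := by
        rw [hZ1def, mem_support_concat]
        exact Or.inl (Walk.end_mem_support P2)
      have hZ1nn : ¬ Z1.Nil := by
        rw [Walk.nil_iff_length_eq, hZ1len]
        omega
      have hP3rsub : ∀ z ∈ P3.reverse.support, z ∈ P3.support := by
        intro z hz
        rwa [Walk.support_reverse, List.mem_reverse] at hz
      have hglue : ∀ z ∈ qa.support, z ∈ P3.reverse.support → z = w := fun z hz hz' =>
        hmeet z hz (hRsub z (hP3sub z (hP3rsub z hz')))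
      refine ⟨y, Z1.rotate y hyZ1, qa.append P3.reverse, hZ1.rotate hyZ1, ?_, ?_,
        append_isPath hqa hP3p.reverse hglue, ?_, ?_, ?_⟩
      · rwa [length_rotate]
      · intro z hz
        rw [mem_support_rotate Z1 hZ1nn hyZ1] at hz
        exact hksub z (hRsub z (hP2sub z (hZ1sub z hz)))
      · intro z hz
        rw [Walk.mem_support_append_iff] at hz
        rcases hz with hz | hz
        · exact hqasub z hz
        · exact hksub z (hRsub z (hP3sub z (hP3rsub z hz)))
      · intro z hz hz2
        rw [mem_support_rotate Z1 hZ1nn hyZ1] at hz2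
        have hzP2 : z ∈ P2.support := hZ1sub z hz2
        rw [Walk.mem_support_append_iff] at hz
        rcases hz with hz | hz
        · have : z = w := hmeet z hz (hRsub z (hP2sub z hzP2))
          exact absurd (this ▸ hzP2) f1
        · exact hintR z hzP2 (hP3rsub z hz)
      · rw [length_rotate, hZ1len, Walk.length_append, Walk.length_reverse]
        omega
  · -- Z2 odd: replace the cycle
    refine ⟨w, Z2, qa, hZ2, hpar, fun z hz => hksub z (hZ2sub z hz), hqa, hqasub, ?_, ?_⟩
    · exact fun z hz hz2 => hmeet z hz (hZ2sub z hz2)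
    · rw [hZ2len]
      omega

/-- removing an edge from the cycle to the interior of the tail -/
lemma surgery_attach {v w x y : V} {c : G.Walk v v} {k : G.Walk w w} {qa : G.Walk v w}
    (hk : k.IsCycle) (hodd : Odd k.length)
    (hksub : ∀ z ∈ k.support, z ∈ c.support)
    (hqa : qa.IsPath) (hqasub : ∀ z ∈ qa.support, z ∈ c.support)
    (hmeet : ∀ z ∈ qa.support, z ∈ k.support → z = w)
    (hadj : G.Adj x y) (hxk : x ∈ k.support) (hyqa : y ∈ qa.support)
    (hynk : y ∉ k.support) (hxnqa : x ∉ qa.support) :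
    ∃ (w' : V) (k' : G.Walk w' w') (qa' : G.Walk v w'),
      k'.IsCycle ∧ Odd k'.length ∧ (∀ z ∈ k'.support, z ∈ c.support) ∧
      qa'.IsPath ∧ (∀ z ∈ qa'.support, z ∈ c.support) ∧
      (∀ z ∈ qa'.support, z ∈ k'.support → z = w') ∧
      k'.length + qa'.length < k.length + qa.length := by
  have hyw : y ≠ w := fun hh => hynk (hh ▸ Walk.start_mem_support k)
  have hxw : x ≠ w := fun hh => hxnqa (hh ▸ Walk.end_mem_support qa)
  set t := qa.takeUntil y hyqa with htdef
  set d := qa.dropUntil y hyqa with hddef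
  have htp : t.IsPath := hqa.takeUntil hyqa
  have hdp : d.IsPath := hqa.dropUntil hyqa
  have hwt : w ∉ t.support := pathEnd hqa hyqa hyw
  have hld : t.length + d.length = qa.length := length_take_add_drop qa hyqa
  have hLd : 1 ≤ d.length := by
    rcases Nat.eq_zero_or_pos d.length with hz | hz
    · exact absurd (Walk.eq_of_length_eq_zero hz) hyw
    · exact hz
  have htsub : ∀ z ∈ t.support, z ∈ qa.support := fun z hz =>
    Walk.support_takeUntil_subset qa hyqa hz
  by_cases hLd2 : 2 ≤ d.length
  · -- attach the edge y–x to the truncated tail, rotate the cycle to x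
    have hxt : x ∉ t.support := fun hh => hxnqa (htsub x hh)
    have hknn : ¬ k.Nil := hk.not_nil
    refine ⟨x, k.rotate x hxk, t.concat hadj.symm, hk.rotate hxk, ?_, ?_,
      concat_isPath htp hadj.symm hxt, ?_, ?_, ?_⟩
    · rwa [length_rotate]
    · intro z hz
      rw [mem_support_rotate k hknn hxk] at hz
      exact hksub z hz
    · intro z hz
      rw [mem_support_concat] at hz
      rcases hz with hz | rfl
      · exact hqasub z (htsub z hz)
      · exact hksub z hxk
    · intro z hz hz2
      rw [mem_support_rotate k hknn hxk] at hz2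
      rw [mem_support_concat] at hz
      rcases hz with hz | rfl
      · have : z = w := hmeet z (htsub z hz) hz2
        exact absurd (this ▸ hz) hwt
      · rfl
    · rw [length_rotate, Walk.length_concat]
      omega
  · -- d is a single edge y–w; reroute the cycle through y
    have hLd1 : d.length = 1 := by omega
    have heyw : s(y, w) ∈ qa.edges := Walk.edges_dropUntil_subset qa hyqa (len1_edge d hLd1)
    have hadjyw : G.Adj y w := qa.adj_of_mem_edges heyw
    obtain ⟨hd1p, hd2p, hint1⟩ := cycSplit hk hxk hxw
    set d1 := k.takeUntil x hxk with hd1def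
    set d2 := k.dropUntil x hxk with hd2def
    have hlk : d1.length + d2.length = k.length := length_take_add_drop k hxk
    have hd1sub : ∀ z ∈ d1.support, z ∈ k.support := fun z hz =>
      Walk.support_takeUntil_subset k hxk hz
    have hd2sub : ∀ z ∈ d2.support, z ∈ k.support := fun z hz =>
      Walk.support_dropUntil_subset k hxk hz
    have hL1 : 1 ≤ d1.length := by
      rcases Nat.eq_zero_or_pos d1.length with hz | hz
      · exact absurd (Walk.eq_of_length_eq_zero hz).symm hxw
      · exact hz
    have hL2 : 1 ≤ d2.length := by
      rcases Nat.eq_zero_or_pos d2.length with hz | hz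
      · exact absurd (Walk.eq_of_length_eq_zero hz) hxw
      · exact hz
    have hynd1 : y ∉ d1.support := fun hh => hynk (hd1sub y hh)
    have hynd2 : y ∉ d2.support := fun hh => hynk (hd2sub y hh)
    -- cycle A through y using d1 : w → x
    set PA := Walk.cons hadjyw d1 with hPAdef
    have hPAp : PA.IsPath := hd1p.cons hynd1
    have hePA : s(x, y) ∉ PA.edges := by
      rw [hPAdef, Walk.edges_cons, List.mem_cons]
      rintro (hh | hh)
      · rw [Sym2.eq_iff] at hh
        rcases hh with ⟨rfl, rfl⟩ | ⟨h1, h2⟩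
        · exact hxnqa hyqa
        · exact hxw h1
      · exact hynd1 (Walk.snd_mem_support_of_mem_edges d1 (by rwa [Sym2.eq_swap] at hh))
    set A := PA.concat hadj with hAdef
    have hA : A.IsCycle := concat_isCycle hPAp hadj hePA
    have hAlen : A.length = d1.length + 2 := by
      rw [hAdef, Walk.length_concat, hPAdef, Walk.length_cons]
    have hAsub : ∀ z ∈ A.support, z = y ∨ z ∈ k.support := by
      intro z hz
      rw [hAdef, mem_support_concat] at hz
      rcases hz with hz | rfl
      · rw [hPAdef, Walk.support_cons, List.mem_cons] at hz
        rcases hz with rfl | hz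
        · exact Or.inl rfl
        · exact Or.inr (hd1sub z hz)
      · exact Or.inl rfl
    -- cycle B through y using d2 : x → w
    set PB := Walk.cons hadj.symm d2 with hPBdef
    have hPBp : PB.IsPath := hd2p.cons hynd2
    have hePB : s(w, y) ∉ PB.edges := by
      rw [hPBdef, Walk.edges_cons, List.mem_cons]
      rintro (hh | hh)
      · rw [Sym2.eq_iff] at hh
        rcases hh with ⟨h1, h2⟩ | ⟨h1, h2⟩
        · exact hyw h1.symm
        · exact hxw h1.symm
      · exact hynd2 (Walk.snd_mem_support_of_mem_edges d2 (by rwa [Sym2.eq_swap] at hh))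
    set B := PB.concat hadjyw.symm with hBdef
    have hB : B.IsCycle := concat_isCycle hPBp hadjyw.symm hePB
    have hBlen : B.length = d2.length + 2 := by
      rw [hBdef, Walk.length_concat, hPBdef, Walk.length_cons]
    have hBsub : ∀ z ∈ B.support, z = y ∨ z ∈ k.support := by
      intro z hz
      rw [hBdef, mem_support_concat] at hz
      rcases hz with hz | rfl
      · rw [hPBdef, Walk.support_cons, List.mem_cons] at hz
        rcases hz with rfl | hz
        · exact Or.inl rfl
        · exact Or.inr (hd2sub z hz)
      · exact Or.inl rfl
    have hoddk := hodd
    rw [Nat.odd_iff] at hoddk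
    have hysupp : y ∈ qa.support := hyqa
    -- common facts for the new tail t
    have hmeet' : ∀ (Z : G.Walk y y), (∀ z ∈ Z.support, z = y ∨ z ∈ k.support) →
        ∀ z ∈ t.support, z ∈ Z.support → z = y := by
      intro Z hZsub z hz hz2
      rcases hZsub z hz2 with rfl | hzk
      · rfl
      · have : z = w := hmeet z (htsub z hz) hzk
        exact absurd (this ▸ hz) hwt
    have hcsub' : ∀ (Z : G.Walk y y), (∀ z ∈ Z.support, z = y ∨ z ∈ k.support) →
        ∀ z ∈ Z.support, z ∈ c.support := by
      intro Z hZsub z hz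
      rcases hZsub z hz with rfl | hzk
      · exact hqasub z hyqa
      · exact hksub z hzk
    have htcsub : ∀ z ∈ t.support, z ∈ c.support := fun z hz => hqasub z (htsub z hz)
    rcases Nat.even_or_odd d1.length with hpar | hpar
    · -- d2 odd, use B
      have hBodd : Odd B.length := by
        rw [Nat.odd_iff, hBlen]
        rw [Nat.even_iff] at hpar
        omega
      have hL2' : d2.length ≤ k.length - 2 := by
        rw [Nat.even_iff] at hpar
        omega
      exact ⟨y, B, t, hB, hBodd, hcsub' B hBsub, htp, htcsub, hmeet' B hBsub, by omega⟩
    · -- d1 odd, use A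
      have hAodd : Odd A.length := by
        rw [Nat.odd_iff, hAlen]
        rw [Nat.odd_iff] at hpar
        omega
      have hL1' : d1.length ≤ k.length - 2 := by
        rw [Nat.odd_iff] at hpar
        omega
      exact ⟨y, A, t, hA, hAodd, hcsub' A hAsub, htp, htcsub, hmeet' A hAsub, by omega⟩

/-- main minimization: an induced "tadpole" (odd cycle plus tail from v) inside the
vertex set of an odd cycle through v -/
lemma tadpole_aux {v : V} {c : G.Walk v v} :
    ∀ (n : ℕ) (w : V) (k : G.Walk w w) (qa : G.Walk v w), k.length + qa.length ≤ n →
    k.IsCycle → Odd k.length → (∀ z ∈ k.support, z ∈ c.support) →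
    qa.IsPath → (∀ z ∈ qa.support, z ∈ c.support) →
    (∀ z ∈ qa.support, z ∈ k.support → z = w) →
    ∃ (w' : V) (k' : G.Walk w' w') (qa' : G.Walk v w'),
      k'.IsCycle ∧ Odd k'.length ∧ (∀ z ∈ k'.support, z ∈ c.support) ∧
      qa'.IsPath ∧ (∀ z ∈ qa'.support, z ∈ c.support) ∧
      (∀ z ∈ qa'.support, z ∈ k'.support → z = w') ∧
      (∀ x y, G.Adj x y → x ∈ k'.support → y ∈ k'.support → s(x, y) ∈ k'.edges) ∧
      (∀ x y, G.Adj x y → x ∈ qa'.support → y ∈ qa'.support → s(x, y) ∈ qa'.edges) ∧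
      (∀ x y, G.Adj x y → x ∈ k'.support → y ∈ qa'.support →
        s(x, y) ∈ k'.edges ∨ s(x, y) ∈ qa'.edges) := by
  intro n
  induction n with
  | zero =>
    intro w k qa hn hk _ _ _ _ _
    have := hk.three_le_length
    omega
  | succ n ih =>
    intro w k qa hn hk hkodd hksub hqa hqasub hmeet
    by_cases h1 : ∀ x y, G.Adj x y → x ∈ k.support → y ∈ k.support → s(x, y) ∈ k.edges
    · by_cases h2 : ∀ x y, G.Adj x y → x ∈ qa.support → y ∈ qa.support → s(x, y) ∈ qa.edges
      · by_cases h3 : ∀ x y, G.Adj x y → x ∈ k.support → y ∈ qa.support →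
            y ∈ k.support ∨ x ∈ qa.support
        · refine ⟨w, k, qa, hk, hkodd, hksub, hqa, hqasub, hmeet, h1, h2, ?_⟩
          intro x y hadj hx hy
          rcases h3 x y hadj hx hy with hyk | hxqa
          · exact Or.inl (h1 x y hadj hx hyk)
          · exact Or.inr (h2 x y hadj hxqa hy)
        · push_neg at h3
          obtain ⟨x, y, hadj, hx, hy, hynk, hxnqa⟩ := h3
          obtain ⟨w', k', qa', ha, hb, hc, hd, hee, hf, hg⟩ :=
            surgery_attach hk hkodd hksub hqa hqasub hmeet hadj hx hy hynk hxnqa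
          exact ih w' k' qa' (by omega) ha hb hc hd hee hf
      · push_neg at h2
        obtain ⟨x, y, hadj, hx, hy, he⟩ := h2
        obtain ⟨q, hqp, hqsub, hqlen⟩ := chord_shorten hqa hadj hx hy he
        refine ih w k q (by omega) hk hkodd hksub hqp
          (fun z hz => hqasub z (hqsub z hz)) (fun z hz hz2 => hmeet z (hqsub z hz) hz2)
    · push_neg at h1
      obtain ⟨x, y, hadj, hx, hy, he⟩ := h1
      by_cases hxw : x = w
      · subst hxw
        have hyw : y ≠ x := fun hh => hadj.ne hh.symm
        obtain ⟨k', ha, hb, hc, hd⟩ := surgery_chord_base hk hkodd hadj hy hyw he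
        exact ih x k' qa (by omega) ha hb (fun z hz => hksub z (hc z hz)) hqa hqasub
          (fun z hz hz2 => hmeet z hz (hc z hz2))
      · by_cases hyw : y = w
        · subst hyw
          have hxy' : x ≠ y := fun hh => hadj.ne hh
          obtain ⟨k', ha, hb, hc, hd⟩ := surgery_chord_base hk hkodd hadj.symm hx
            (fun hh => hxw hh) (by rwa [Sym2.eq_swap])
          exact ih y k' qa (by omega) ha hb (fun z hz => hksub z (hc z hz)) hqa hqasub
            (fun z hz hz2 => hmeet z hz (hc z hz2))
        · rcases comparable k x y hx hy with hord | hord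
          · obtain ⟨w', k', qa', ha, hb, hc, hd, hee, hf, hg⟩ :=
              surgery_chord_mid hk hkodd hksub hqa hqasub hmeet hadj hx hxw hyw hord he
            exact ih w' k' qa' (by omega) ha hb hc hd hee hf
          · obtain ⟨w', k', qa', ha, hb, hc, hd, hee, hf, hg⟩ :=
              surgery_chord_mid hk hkodd hksub hqa hqasub hmeet hadj.symm hy hyw hxw hord
              (by rwa [Sym2.eq_swap])
            exact ih w' k' qa' (by omega) ha hb hc hd hee hf

/-- existence of an induced tadpole inside an odd cycle -/
lemma exists_good_tadpole {v : V} {c : G.Walk v v} (hc : c.IsCycle) (hodd : Odd c.length) :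
    ∃ (w : V) (k : G.Walk w w) (qa : G.Walk v w),
      k.IsCycle ∧ Odd k.length ∧ (∀ z ∈ k.support, z ∈ c.support) ∧
      qa.IsPath ∧ (∀ z ∈ qa.support, z ∈ c.support) ∧
      (∀ z ∈ qa.support, z ∈ k.support → z = w) ∧
      (∀ x y, G.Adj x y → x ∈ k.support → y ∈ k.support → s(x, y) ∈ k.edges) ∧
      (∀ x y, G.Adj x y → x ∈ qa.support → y ∈ qa.support → s(x, y) ∈ qa.edges) ∧
      (∀ x y, G.Adj x y → x ∈ k.support → y ∈ qa.support →
        s(x, y) ∈ k.edges ∨ s(x, y) ∈ qa.edges) :=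
  tadpole_aux (c.length + (Walk.nil : G.Walk v v).length) v c Walk.nil le_rfl hc hodd
    (fun z hz => hz) (Walk.IsPath.nil) (fun z hz => by
      rw [Walk.mem_support_nil_iff] at hz; exact hz ▸ Walk.start_mem_support c)
    (fun z hz _ => by rwa [Walk.mem_support_nil_iff] at hz)

end


end AuxKL

end AuxKLSection

open SimpleGraph Walk AuxKL

/-- Key lemma: in a connected graph with no induced "two disjoint odd cycles joined by a
path of length ≥ 2" subgraph, given two vertex-disjoint odd cycles joined by a path,
one of the configurations (a), (b), (c) occurs. -/
theorem key_lemma_odd_cycles_path {V : Type*} [Fintype V] (G : SimpleGraph V)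
    (hconn : G.Connected) (hno : ¬ HasTwoOddCyclesJoinedByPath G 2)
    (v v' : V) (c : G.Walk v v) (c' : G.Walk v' v') (p : G.Walk v v')
    (hc : c.IsCycle) (hc' : c'.IsCycle) (hodd : Odd c.length) (hodd' : Odd c'.length)
    (hdisj : ∀ x ∈ c.support, x ∉ c'.support) (hp : p.IsPath) :
    (∃ a b, G.Adj a b ∧ a ∈ c.support ∧ b ∈ c'.support) ∨
      (∃ a b, G.Adj a b ∧ a ∈ c.support ∧ b ∈ p.support ∧ b ≠ v ∧
        s(a, b) ∉ p.edges) ∨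
      (∃ a b, G.Adj a b ∧ a ∈ c'.support ∧ b ∈ p.support ∧ b ≠ v' ∧
        s(a, b) ∉ p.edges) := by
  classical
  by_cases hA : ∃ a b, G.Adj a b ∧ a ∈ c.support ∧ b ∈ c'.support
  · exact Or.inl hA
  by_cases hB : ∃ a b, G.Adj a b ∧ a ∈ c.support ∧ b ∈ p.support ∧ b ≠ v ∧ s(a, b) ∉ p.edges
  · exact Or.inr (Or.inl hB)
  by_cases hC : ∃ a b, G.Adj a b ∧ a ∈ c'.support ∧ b ∈ p.support ∧ b ≠ v' ∧ s(a, b) ∉ p.edges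
  · exact Or.inr (Or.inr hC)
  exfalso
  push_neg at hA hB hC
  have hvnc' : v ∉ c'.support := hdisj v (Walk.start_mem_support c)
  have hv'nc : v' ∉ c.support := fun hh => hdisj v' hh (Walk.start_mem_support c')
  have hvv' : v ≠ v' := fun hh => hvnc' (hh ▸ Walk.start_mem_support c')
  -- Step 1 : p meets c only at v, and c' only at v'
  have SA : ∀ x ∈ p.support, x ∈ c.support → x = v :=
    step1 hc hp hv'nc (fun a b hadj ha hb hbv => hB a b hadj ha hb hbv)
  have SB : ∀ x ∈ p.support, x ∈ c'.support → x = v' := by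
    have hBrev : ∀ a b, G.Adj a b → a ∈ c'.support → b ∈ p.reverse.support → b ≠ v' →
        s(a, b) ∈ p.reverse.edges := by
      intro a b hadj ha hb hbv
      rw [Walk.support_reverse, List.mem_reverse] at hb
      rw [Walk.edges_reverse, List.mem_reverse]
      exact hC a b hadj ha hb hbv
    have hres := step1 hc' hp.reverse hvnc' hBrev
    intro x hx hxc'
    exact hres x (by rwa [Walk.support_reverse, List.mem_reverse]) hxc'
  -- localization of edges
  have halfC : ∀ a b, G.Adj a b → a ∈ c.support →
      (b ∈ c.support ∨ b ∈ c'.support ∨ b ∈ p.support) →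
      (a ∈ c.support ∧ b ∈ c.support) ∨ (a ∈ c'.support ∧ b ∈ c'.support) ∨
        (a ∈ p.support ∧ b ∈ p.support) := by
    intro a b hadj ha hb
    rcases hb with hb | hb | hb
    · exact Or.inl ⟨ha, hb⟩
    · exact absurd hb (hA a b hadj ha)
    · by_cases hbv : b = v
      · exact Or.inl ⟨ha, hbv ▸ Walk.start_mem_support c⟩
      · have hedge := hB a b hadj ha hb hbv
        exact Or.inr (Or.inr ⟨Walk.fst_mem_support_of_mem_edges p hedge, hb⟩)
  have halfC' : ∀ a b, G.Adj a b → a ∈ c'.support →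
      (b ∈ c.support ∨ b ∈ c'.support ∨ b ∈ p.support) →
      (a ∈ c.support ∧ b ∈ c.support) ∨ (a ∈ c'.support ∧ b ∈ c'.support) ∨
        (a ∈ p.support ∧ b ∈ p.support) := by
    intro a b hadj ha hb
    rcases hb with hb | hb | hb
    · exact absurd ha (hA b a hadj.symm hb)
    · exact Or.inr (Or.inl ⟨ha, hb⟩)
    · by_cases hbv : b = v'
      · exact Or.inr (Or.inl ⟨ha, hbv ▸ Walk.start_mem_support c'⟩)
      · have hedge := hC a b hadj ha hb hbv
        exact Or.inr (Or.inr ⟨Walk.fst_mem_support_of_mem_edges p hedge, hb⟩)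
  have LOCAL : ∀ a b, G.Adj a b →
      (a ∈ c.support ∨ a ∈ c'.support ∨ a ∈ p.support) →
      (b ∈ c.support ∨ b ∈ c'.support ∨ b ∈ p.support) →
      (a ∈ c.support ∧ b ∈ c.support) ∨ (a ∈ c'.support ∧ b ∈ c'.support) ∨
        (a ∈ p.support ∧ b ∈ p.support) := by
    intro a b hadj ha hb
    rcases ha with ha | ha | ha
    · exact halfC a b hadj ha hb
    · exact halfC' a b hadj ha hb
    · rcases hb with hb | hb | hb
      · rcases halfC b a hadj.symm hb (Or.inr (Or.inr ha)) with ⟨h1, h2⟩ | ⟨h1, h2⟩ | ⟨h1, h2⟩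
        · exact Or.inl ⟨h2, h1⟩
        · exact Or.inr (Or.inl ⟨h2, h1⟩)
        · exact Or.inr (Or.inr ⟨h2, h1⟩)
      · rcases halfC' b a hadj.symm hb (Or.inr (Or.inr ha)) with ⟨h1, h2⟩ | ⟨h1, h2⟩ | ⟨h1, h2⟩
        · exact Or.inl ⟨h2, h1⟩
        · exact Or.inr (Or.inl ⟨h2, h1⟩)
        · exact Or.inr (Or.inr ⟨h2, h1⟩)
      · exact Or.inr (Or.inr ⟨ha, hb⟩)
  -- induced tadpoles and an induced connecting path
  obtain ⟨w₁, k₁, a₁, hk₁, hk₁odd, hk₁sub, ha₁, ha₁sub, hmeet₁, M1₁, M2₁, M3₁⟩ :=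
    exists_good_tadpole hc hodd
  obtain ⟨w₂, k₂, a₂, hk₂, hk₂odd, hk₂sub, ha₂, ha₂sub, hmeet₂, M1₂, M2₂, M3₂⟩ :=
    exists_good_tadpole hc' hodd'
  obtain ⟨qb, hqb, hqbsub, hqblen, hqbind⟩ := exists_induced_path p hp
  have hva₁ : v ∈ a₁.support := Walk.start_mem_support a₁
  have hv'a₂ : v' ∈ a₂.support := Walk.start_mem_support a₂
  have hvqb : v ∈ qb.support := Walk.start_mem_support qb
  have hv'qb : v' ∈ qb.support := Walk.end_mem_support qb
  -- the connecting path Q from w₁ to w₂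
  have hglue2 : ∀ z ∈ qb.support, z ∈ a₂.support → z = v' := fun z hz hz2 =>
    SB z (hqbsub z hz) (ha₂sub z hz2)
  set inner := qb.append a₂ with hinnerdef
  have hinnerp : inner.IsPath := append_isPath hqb ha₂ hglue2
  have hinnermem : ∀ z, z ∈ inner.support ↔ z ∈ qb.support ∨ z ∈ a₂.support := by
    intro z; rw [hinnerdef, Walk.mem_support_append_iff]
  have ha₁rev : ∀ z, z ∈ a₁.reverse.support ↔ z ∈ a₁.support := by
    intro z; rw [Walk.support_reverse, List.mem_reverse]
  have hglue1 : ∀ z ∈ a₁.reverse.support, z ∈ inner.support → z = v := by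
    intro z hz hz2
    rw [ha₁rev] at hz
    rcases (hinnermem z).mp hz2 with hz2 | hz2
    · exact SA z (hqbsub z hz2) (ha₁sub z hz)
    · exact absurd (ha₂sub z hz2) (hdisj z (ha₁sub z hz))
  set Q := a₁.reverse.append inner with hQdef
  have hQp : Q.IsPath := append_isPath ha₁.reverse hinnerp hglue1
  have hQmem : ∀ z, z ∈ Q.support ↔ z ∈ a₁.support ∨ z ∈ qb.support ∨ z ∈ a₂.support := by
    intro z
    rw [hQdef, Walk.mem_support_append_iff, ha₁rev, hinnermem]
  have hQlen : Q.length = a₁.length + qb.length + a₂.length := by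
    rw [hQdef, Walk.length_append, hinnerdef, Walk.length_append, Walk.length_reverse]
    omega
  have hqb2 : 2 ≤ qb.length := by
    rcases Nat.lt_or_ge qb.length 2 with hlt | hge
    · interval_cases hh : qb.length
      · exact absurd (Walk.eq_of_length_eq_zero hh) hvv'
      · exact absurd (Walk.start_mem_support c')
          (hA v v' (qb.adj_of_mem_edges (len1_edge qb hh)) (Walk.start_mem_support c))
    · exact hge
  -- edge inclusions into Q
  have ha₁e : ∀ e ∈ a₁.edges, e ∈ Q.edges := by
    intro e he
    rw [hQdef, Walk.edges_append, List.mem_append]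
    left
    rw [Walk.edges_reverse, List.mem_reverse]
    exact he
  have hqbe : ∀ e ∈ qb.edges, e ∈ Q.edges := by
    intro e he
    rw [hQdef, Walk.edges_append, List.mem_append]
    right
    rw [hinnerdef, Walk.edges_append, List.mem_append]
    exact Or.inl he
  have ha₂e : ∀ e ∈ a₂.edges, e ∈ Q.edges := by
    intro e he
    rw [hQdef, Walk.edges_append, List.mem_append]
    right
    rw [hinnerdef, Walk.edges_append, List.mem_append]
    exact Or.inr he
  apply hno
  refine ⟨w₁, w₂, k₁, k₂, Q, hk₁, hk₂, hk₁odd, hk₂odd, hQp, by omega, ?_, ?_, ?_, ?_⟩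
  · intro x hx hx2
    exact hdisj x (hk₁sub x hx) (hk₂sub x hx2)
  · intro x hx hxk
    rcases (hQmem x).mp hx with hz | hz | hz
    · exact hmeet₁ x hz hxk
    · have hxv : x = v := SA x (hqbsub x hz) (hk₁sub x hxk)
      subst hxv
      exact hmeet₁ x hva₁ hxk
    · exact absurd (ha₂sub x hz) (hdisj x (hk₁sub x hxk))
  · intro x hx hxk
    rcases (hQmem x).mp hx with hz | hz | hz
    · exact absurd (hk₂sub x hxk) (hdisj x (ha₁sub x hz))
    · have hxv : x = v' := SB x (hqbsub x hz) (hk₂sub x hxk)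
      subst hxv
      exact hmeet₂ x hv'a₂ hxk
    · exact hmeet₂ x hz hxk
  · intro a b hadj ha hb
    have transl : ∀ z, (z ∈ k₁.support ∨ z ∈ k₂.support ∨ z ∈ Q.support) →
        (z ∈ c.support ∨ z ∈ c'.support ∨ z ∈ p.support) := by
      intro z hz
      rcases hz with hz | hz | hz
      · exact Or.inl (hk₁sub z hz)
      · exact Or.inr (Or.inl (hk₂sub z hz))
      · rcases (hQmem z).mp hz with h | h | h
        · exact Or.inl (ha₁sub z h)
        · exact Or.inr (Or.inr (hqbsub z h))
        · exact Or.inr (Or.inl (ha₂sub z h))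
    have toC : ∀ z, (z ∈ k₁.support ∨ z ∈ k₂.support ∨ z ∈ Q.support) → z ∈ c.support →
        z ∈ k₁.support ∨ z ∈ a₁.support := by
      intro z hz hzc
      rcases hz with hz | hz | hz
      · exact Or.inl hz
      · exact absurd hzc (fun hh => hdisj z hh (hk₂sub z hz))
      · rcases (hQmem z).mp hz with h | h | h
        · exact Or.inr h
        · exact Or.inr ((SA z (hqbsub z h) hzc) ▸ hva₁)
        · exact absurd hzc (fun hh => hdisj z hh (ha₂sub z h))
    have toC' : ∀ z, (z ∈ k₁.support ∨ z ∈ k₂.support ∨ z ∈ Q.support) → z ∈ c'.support →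
        z ∈ k₂.support ∨ z ∈ a₂.support := by
      intro z hz hzc
      rcases hz with hz | hz | hz
      · exact absurd hzc (hdisj z (hk₁sub z hz))
      · exact Or.inl hz
      · rcases (hQmem z).mp hz with h | h | h
        · exact absurd hzc (hdisj z (ha₁sub z h))
        · exact Or.inr ((SB z (hqbsub z h) hzc) ▸ hv'a₂)
        · exact Or.inr h
    have toP : ∀ z, (z ∈ k₁.support ∨ z ∈ k₂.support ∨ z ∈ Q.support) → z ∈ p.support →
        z ∈ qb.support := by
      intro z hz hzp
      rcases hz with hz | hz | hz
      · exact (SA z hzp (hk₁sub z hz)) ▸ hvqb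
      · exact (SB z hzp (hk₂sub z hz)) ▸ hv'qb
      · rcases (hQmem z).mp hz with h | h | h
        · exact (SA z hzp (ha₁sub z h)) ▸ hvqb
        · exact h
        · exact (SB z hzp (ha₂sub z h)) ▸ hv'qb
    rcases LOCAL a b hadj (transl a ha) (transl b hb) with ⟨hac, hbc⟩ | ⟨hac, hbc⟩ | ⟨hap, hbp⟩
    · rcases toC a ha hac with hak | haa <;> rcases toC b hb hbc with hbk | hba
      · exact Or.inl (M1₁ a b hadj hak hbk)
      · rcases M3₁ a b hadj hak hba with h | h
        · exact Or.inl h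
        · exact Or.inr (Or.inr (ha₁e _ h))
      · rcases M3₁ b a hadj.symm hbk haa with h | h
        · exact Or.inl (by rwa [Sym2.eq_swap])
        · refine Or.inr (Or.inr (ha₁e _ ?_))
          rwa [Sym2.eq_swap]
      · exact Or.inr (Or.inr (ha₁e _ (M2₁ a b hadj haa hba)))
    · rcases toC' a ha hac with hak | haa <;> rcases toC' b hb hbc with hbk | hba
      · exact Or.inr (Or.inl (M1₂ a b hadj hak hbk))
      · rcases M3₂ a b hadj hak hba with h | h
        · exact Or.inr (Or.inl h)
        · exact Or.inr (Or.inr (ha₂e _ h))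
      · rcases M3₂ b a hadj.symm hbk haa with h | h
        · exact Or.inr (Or.inl (by rwa [Sym2.eq_swap]))
        · refine Or.inr (Or.inr (ha₂e _ ?_))
          rwa [Sym2.eq_swap]
      · exact Or.inr (Or.inr (ha₂e _ (M2₂ a b hadj haa hba)))
    · exact Or.inr (Or.inr (hqbe _ (hqbind a b hadj (toP a ha hap) (toP b hb hbp))))
end
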